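/- Suslin Bounding for Π¹₁ sets implies Bounding: assume that for every Π¹₁ set A and every f : ω₁ → A there is a tree T on ω × ω₁ with p[T] = A such that { α : f(α) ∈ p[T ↾ (ω × α)] } contains a club. Then every function from ω₁ to ω₁ is bounded on a club by a canonical function for an ordinal less than ω₂. -/

import Mathlib

open ZFSet FirstOrder

namespace P746

/-! ## First-order language with membership and a wellordering predicate -/

/-- The language with two binary relation symbols: `∈` and a wellordering `<*`. -/
def L : FirstOrder.Language where
  Functions := fun _ => Empty
  Relations := fun n => match n with
    | 2 => Fin 2
    | _ => Empty

/-- The `L`-structure on (the members of) a ZF-set `M`, interpreting the first relation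
as membership and the second as a given relation `r`. -/
def mStruc (M : ZFSet) (r : ZFSet → ZFSet → Prop) : L.Structure M.toSet where
  funMap := fun f _ => f.elim
  RelMap := fun {n} => match n with
    | 0 => fun R _ => R.elim
    | 1 => fun R _ => R.elim
    | 2 => fun R v => @ite _ (R = (0 : Fin 2)) (instDecidableEqFin 2 R 0) ((v 0 : ZFSet) ∈ (v 1 : ZFSet)) (r (v 0) (v 1))
    | (_+3) => fun R _ => R.elim

/-- `X` is an elementary substructure of `(M, ∈, r)`: `X ⊆ M` and every first-order formula
with parameters from `X` holds in `X` iff it holds in `M`. -/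
def ElemSub (M : ZFSet) (r : ZFSet → ZFSet → Prop) (X : ZFSet) : Prop :=
  ∃ h : X ⊆ M,
    ∀ (n : ℕ) (φ : L.Formula (Fin n)) (v : Fin n → X.toSet),
      (letI := mStruc M r
       φ.Realize (fun i => (⟨(v i : ZFSet), h (v i).2⟩ : M.toSet))) ↔
      (letI := mStruc X r; φ.Realize v)

/-- `r` is a wellordering of the members of `S`. -/
def WOn (S : ZFSet) (r : ZFSet → ZFSet → Prop) : Prop :=
  IsWellOrder S.toSet (Subrel r S.toSet)

/-! ## Basic set-theoretic notions inside `ZFSet` -/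

/-- `x` is a (von Neumann) ordinal: a transitive set of transitive sets. -/
def IsOrd (x : ZFSet) : Prop :=
  x.IsTransitive ∧ ∀ y ∈ x.toSet, ZFSet.IsTransitive y

/-- `w` is the first uncountable ordinal `ω₁`. -/
def IsOmega1 (w : ZFSet) : Prop :=
  IsOrd w ∧ ¬ w.toSet.Countable ∧ ∀ y ∈ w.toSet, y.toSet.Countable

/-- The set `[x]^{<ω}` of finite subsets of `x`. -/
noncomputable def finPow (x : ZFSet) : ZFSet :=
  ZFSet.sep (fun a => a.toSet.Finite) x.powerset

/-- The set `[x]^n` of subsets of `x` of size `n`. -/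
noncomputable def finPowCard (x : ZFSet) (n : ℕ) : ZFSet :=
  ZFSet.sep (fun a => a.toSet.Finite ∧ a.toSet.ncard = n) x.powerset

/-- `D^X_η`: the set of finite `a ⊆ η` such that `f(a) ∈ X` for every
`f : [η]^{|a|} → ω₁` belonging to `X` (`w` stands for `ω₁`). -/
def Dset (w X η : ZFSet) : Set ZFSet :=
  {a | a ∈ finPow η ∧ ∀ f ∈ X.toSet, ZFSet.IsFunc (finPowCard η a.toSet.ncard) w f →
    ∀ v : ZFSet, ZFSet.pair a v ∈ f → v ∈ X}

/-- The Skolem hull of `X ∪ z` in `M` (with functions on `[η]^{<ω}`):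
`X` together with all values `f(a)` for `f : [η]^{<ω} → M` in `X` and finite `a ⊆ z`. -/
def SkHull (M η X z : ZFSet) : Set ZFSet :=
  X.toSet ∪ {y | ∃ f ∈ X.toSet, ZFSet.IsFunc (finPow η) M f ∧
    ∃ a : ZFSet, a ∈ finPow η ∧ a ⊆ z ∧ ZFSet.pair a y ∈ f}

/-- `x` is hereditarily of cardinality less than `κ`. -/
def HerLt (κ : Cardinal) (x : ZFSet) : Prop :=
  ZFSet.mem_wf.fix (C := fun _ => Prop)
    (fun y ih => Cardinal.mk y.toSet < κ ∧ ∀ z, ∀ h : z ∈ y, ih z h) x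

/-- `H` is the collection `H(κ)` of sets hereditarily of cardinality `< κ`. -/
def IsHCard (κ : Cardinal) (H : ZFSet) : Prop :=
  ∀ x : ZFSet, x ∈ H ↔ HerLt κ x

/-! ## Clubs, stationarity and canonical functions on `ω₁` -/

noncomputable def omega1 : Ordinal.{0} := (Cardinal.aleph 1).ord
noncomputable def omega2 : Ordinal.{0} := (Cardinal.aleph 2).ord

/-- `C` is a club (closed unbounded) subset of `ω₁`. -/
def IsClub (C : Set Ordinal.{0}) : Prop :=
  C ⊆ Set.Iio omega1 ∧
  (∀ o, o < omega1 → Order.IsSuccLimit o → (∀ b, b < o → ∃ c ∈ C, b ≤ c ∧ c < o) → o ∈ C) ∧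
  (∀ b, b < omega1 → ∃ c ∈ C, b < c ∧ c < omega1)

/-- `S` is a stationary subset of `ω₁`. -/
def IsStat (S : Set Ordinal.{0}) : Prop :=
  ∀ C, IsClub C → (S ∩ C).Nonempty

/-- `f ≤ g` on a club. -/
def BddOnClub (f g : Ordinal.{0} → Ordinal.{0}) : Prop :=
  ∃ C, IsClub C ∧ ∀ α ∈ C, f α ≤ g α

/-- `f < g` on a club. -/
def LtOnClub (f g : Ordinal.{0} → Ordinal.{0}) : Prop :=
  ∃ C, IsClub C ∧ ∀ α ∈ C, f α < g α

/-- `f` is a canonical function for `γ`: it is above every canonical function for every `β < γ`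
(mod clubs), and minimally so.  (This is the standard recursive characterization of the
statement that the empty condition in `P(ω₁)/NS_{ω₁}` forces `j(f)(ω₁^V) = γ`.) -/
def Canonical : Ordinal.{0} → (Ordinal.{0} → Ordinal.{0}) → Prop :=
  Ordinal.lt_wf.fix (C := fun _ => (Ordinal.{0} → Ordinal.{0}) → Prop)
    (fun γ ih f =>
      (∀ β, ∀ hβ : β < γ, ∀ g, ih β hβ g → LtOnClub g f) ∧
      ∀ h : Ordinal.{0} → Ordinal.{0},
        (∀ β, ∀ hβ : β < γ, ∀ g, ih β hβ g → LtOnClub g h) → BddOnClub f h)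

/-- Every `f : ω₁ → ω₁` is bounded on a club by a canonical function for some `γ < ω₂`. -/
def Bounding : Prop :=
  ∀ f : Ordinal.{0} → Ordinal.{0}, (∀ α, α < omega1 → f α < omega1) →
    ∃ γ, γ < omega2 ∧ ∃ g, Canonical γ g ∧ BddOnClub f g

/-- `o` is the order type of the set of ordinals `s`: there is a strictly increasing
enumeration of `s` indexed by the ordinals below `o`. -/
def IsOtypOf (o : Ordinal.{0}) (s : Set Ordinal.{0}) : Prop :=
  ∃ e : Ordinal.{0} → Ordinal.{0},
    (∀ i j, i < j → j < o → e i < e j) ∧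
    (∀ i, i < o → e i ∈ s) ∧ ∀ x ∈ s, ∃ i, i < o ∧ e i = x

/-! ## Trees on `ω × ω` and `ω × Ord` (as sets of pairs of lists) -/

def IsTreeN (S : Set (List ℕ × List ℕ)) : Prop :=
  ∀ p ∈ S, p.1.length = p.2.length ∧ ∀ n : ℕ, (p.1.take n, p.2.take n) ∈ S

def IsTreeO (T : Set (List ℕ × List Ordinal.{0})) : Prop :=
  ∀ p ∈ T, p.1.length = p.2.length ∧ ∀ n : ℕ, (p.1.take n, p.2.take n) ∈ T

/-- Projection of a tree on `ω × ω`. -/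
def projN (S : Set (List ℕ × List ℕ)) : Set (ℕ → ℕ) :=
  {x | ∃ y : ℕ → ℕ, ∀ n : ℕ,
    (List.ofFn (fun i : Fin n => x i), List.ofFn (fun i : Fin n => y i)) ∈ S}

/-- Projection of a tree on `ω × Ord`. -/
def projO (T : Set (List ℕ × List Ordinal.{0})) : Set (ℕ → ℕ) :=
  {x | ∃ y : ℕ → Ordinal.{0}, ∀ n : ℕ,
    (List.ofFn (fun i : Fin n => x i), List.ofFn (fun i : Fin n => y i)) ∈ T}

/-- Projection of the restricted tree `T ↾ (ω × α)`. -/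
def projOBelow (T : Set (List ℕ × List Ordinal.{0})) (α : Ordinal.{0}) : Set (ℕ → ℕ) :=
  {x | ∃ y : ℕ → Ordinal.{0}, (∀ i, y i < α) ∧ ∀ n : ℕ,
    (List.ofFn (fun i : Fin n => x i), List.ofFn (fun i : Fin n => y i)) ∈ T}

/-! ## Names, evaluation, and generic extensions -/

open Classical in
/-- Evaluation of a `P`-name `τ` by a filter `G`:
`val G τ = { val G σ : ∃ p ∈ G, (σ, p) ∈ τ }`, by recursion on rank. -/
noncomputable def val (G : ZFSet) : ZFSet → ZFSet :=
  WellFounded.fix (InvImage.wf ZFSet.rank Ordinal.lt_wf)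
    (fun τ ih =>
      ZFSet.sUnion <| ZFSet.sep
        (fun y => ∃ z ∈ τ.toSet,
          if h : ∃ σ, ZFSet.rank σ < ZFSet.rank τ ∧ ∃ p ∈ G.toSet, z = ZFSet.pair σ p
          then y = {ih h.choose h.choose_spec.1}
          else y = ∅)
        (ZFSet.powerset (ZFSet.sUnion (ZFSet.sUnion (ZFSet.sUnion τ)))))

/-- The universe is a generic extension `V[G]` of the transitive class `V` by the
partial order `(P, ≤)` (with `le` the set of pairs `(p,q)` with `p ≤ q`), `G ⊆ P`
a filter meeting every dense subset of `P` lying in `V`, and every set being the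
value of a `P`-name in `V`. -/
def IsGenericExt (V : Set ZFSet) (P le G : ZFSet) : Prop :=
  (∀ x ∈ V, ∀ y, y ∈ x → y ∈ V) ∧ P ∈ V ∧ le ∈ V ∧
  (∀ p, p ∈ P → ZFSet.pair p p ∈ le) ∧
  (∀ p q z, ZFSet.pair p q ∈ le → ZFSet.pair q z ∈ le → ZFSet.pair p z ∈ le) ∧
  (∀ p q, ZFSet.pair p q ∈ le → p ∈ P ∧ q ∈ P) ∧
  G ⊆ P ∧ G ≠ ∅ ∧
  (∀ p q, p ∈ G → q ∈ G → ∃ r, r ∈ G ∧ ZFSet.pair r p ∈ le ∧ ZFSet.pair r q ∈ le) ∧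
  (∀ p q, p ∈ G → q ∈ P → ZFSet.pair p q ∈ le → q ∈ G) ∧
  (∀ D, D ∈ V → D ⊆ P → (∀ p, p ∈ P → ∃ q, q ∈ D ∧ ZFSet.pair q p ∈ le) →
    ∃ q, q ∈ G ∧ q ∈ D) ∧
  (∀ x : ZFSet, ∃ τ, τ ∈ V ∧ x = val G τ)

/-- In the generic extension, the forcing added no new `ω`-sequences of ordinals;
i.e. `P` is `(ω, ∞)`-distributive. -/
def Distributive (V : Set ZFSet) : Prop :=
  ∀ f o : ZFSet, (o.IsTransitive ∧ ∀ y ∈ o.toSet, ZFSet.IsTransitive y) →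
    ZFSet.IsFunc ZFSet.omega o f → f ∈ V

/-! ## Ultrafilters and completeness -/

/-- `U` is an ultrafilter on the set `S`. -/
def IsUltraOn (S U : ZFSet) : Prop :=
  U ⊆ S.powerset ∧ S ∈ U ∧ (∅ : ZFSet) ∉ U ∧
  (∀ A B, A ∈ U → A ⊆ B → B ⊆ S → B ∈ U) ∧
  (∀ A B, A ∈ U → B ∈ U → A ∩ B ∈ U) ∧
  (∀ A, A ⊆ S → (A ∈ U ∨ ZFSet.sep (fun x => x ∉ A) S ∈ U))

/-- `U` is `γ`-complete with respect to families of members of `U` lying in `W`. -/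
def CompleteOn (W : Set ZFSet) (γ : Cardinal.{1}) (S U : ZFSet) : Prop :=
  ∀ F, F ∈ W → F ≠ ∅ → F ⊆ U → Cardinal.mk F.toSet < γ →
    ZFSet.sep (fun x => ∀ A ∈ F.toSet, x ∈ A) S ∈ U

/-! ## Internal finite sequences, trees and homogeneity -/

/-- The set `κ^{<ω}` of finite sequences from `κ` (functions `n → κ`, `n < ω`). -/
noncomputable def seqs (κ : ZFSet) : ZFSet :=
  ZFSet.sep (fun f => ∃ n, n ∈ ZFSet.omega ∧ ZFSet.IsFunc n κ f)
    (((κ ∪ ZFSet.omega).powerset.powerset).powerset)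

/-- The set of functions `a → b` as a ZF-set. -/
noncomputable def funsZ (a b : ZFSet) : ZFSet :=
  ZFSet.sep (fun f => ZFSet.IsFunc a b f) (((a ∪ b).powerset.powerset).powerset)

/-- Restriction of a (set-)function `f` to `m`. -/
noncomputable def restr (f m : ZFSet) : ZFSet :=
  ZFSet.sep (fun p => ∃ i v, i ∈ m ∧ p = ZFSet.pair i v) f

/-- `T` is a tree on `ω × κ`: a set of pairs of finite sequences of equal length,
closed under restriction. -/
def IsTreeZ (κ T : ZFSet) : Prop :=
  ∀ z, z ∈ T → ∃ n s t, n ∈ ZFSet.omega ∧ ZFSet.IsFunc n ZFSet.omega s ∧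
    ZFSet.IsFunc n κ t ∧ z = ZFSet.pair s t ∧
    ∀ m, m ∈ n → ZFSet.pair (restr s m) (restr t m) ∈ T

/-- `x ∈ p[T]`, computed in `W`: there is a branch witness `y ∈ W`. -/
def inProjZ (W : Set ZFSet) (κ T x : ZFSet) : Prop :=
  ∃ y, y ∈ W ∧ ZFSet.IsFunc ZFSet.omega κ y ∧
    ∀ n, n ∈ ZFSet.omega → ZFSet.pair (restr x n) (restr y n) ∈ T

/-- `x ∈ p[T ↾ (ω × A)]` where the branch takes values satisfying `Q`. -/
def inProjVal (κ T x : ZFSet) (Q : ZFSet → Prop) : Prop :=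
  ∃ y, ZFSet.IsFunc ZFSet.omega κ y ∧ (∀ i v, ZFSet.pair i v ∈ y → Q v) ∧
    ∀ n, n ∈ ZFSet.omega → ZFSet.pair (restr x n) (restr y n) ∈ T

/-- The tower `⟨π(x ↾ k) : k < ω⟩` is countably complete, relativized to `W`. -/
def CCTower (W : Set ZFSet) (κ π x : ZFSet) : Prop :=
  ∀ Af, Af ∈ W → ZFSet.IsFunc ZFSet.omega ((seqs κ).powerset) Af →
    (∀ n U a, n ∈ ZFSet.omega → ZFSet.pair (restr x n) U ∈ π →
      ZFSet.pair n a ∈ Af → a ∈ U) →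
    ∃ y, y ∈ W ∧ ZFSet.IsFunc ZFSet.omega κ y ∧
      ∀ n a, n ∈ ZFSet.omega → ZFSet.pair n a ∈ Af → restr y n ∈ a

/-- `(T, π)` is a `γ`-homogeneous tree system on `ω × κ`, relativized to the class `W`. -/
def HomSys (W : Set ZFSet) (γ : Cardinal.{1}) (κ T π : ZFSet) : Prop :=
  IsTreeZ κ T ∧
  (∀ z, z ∈ π → ∃ n s U, n ∈ ZFSet.omega ∧ ZFSet.IsFunc n ZFSet.omega s ∧
    z = ZFSet.pair s U ∧ IsUltraOn (funsZ n κ) U ∧ CompleteOn W γ (funsZ n κ) U ∧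
    ZFSet.sep (fun t => ZFSet.pair s t ∈ T) (funsZ n κ) ∈ U) ∧
  (∀ s U U', ZFSet.pair s U ∈ π → ZFSet.pair s U' ∈ π → U = U') ∧
  (∀ x, x ∈ W → ZFSet.IsFunc ZFSet.omega ZFSet.omega x →
    (inProjZ W κ T x ↔
      ((∀ n, n ∈ ZFSet.omega → ∃ U, ZFSet.pair (restr x n) U ∈ π) ∧ CCTower W κ π x)))

/-- `A` is a `γ`-homogeneously Suslin set of reals, in the sense of the class `W`. -/
def HomSuslinIn (W : Set ZFSet) (γ : Cardinal.{1}) (A : ZFSet) : Prop :=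
  A ⊆ funsZ ZFSet.omega ZFSet.omega ∧
  ∃ κ T π, κ ∈ W ∧ T ∈ W ∧ π ∈ W ∧
    (κ.IsTransitive ∧ ∀ y ∈ κ.toSet, ZFSet.IsTransitive y) ∧
    HomSys W γ κ T π ∧
    ∀ x, ZFSet.IsFunc ZFSet.omega ZFSet.omega x → (x ∈ A ↔ inProjZ W κ T x)


/-! ## Additional notions -/

/-- `γ` is a regular (limit) cardinal, as a ZF-set ordinal: the range of any function
from a smaller ordinal into `γ` is bounded. -/
def IsRegOrd (γ : ZFSet) : Prop :=
  IsOrd γ ∧ (∀ o ∈ γ.toSet, ∃ o' ∈ γ.toSet, o ∈ o') ∧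
  ∀ b f, b ∈ γ → ZFSet.IsFunc b γ f → ∃ o ∈ γ.toSet, ∀ x v, ZFSet.pair x v ∈ f → v ∈ o

/-- `Y` is a minimal `(η, λ)`-extension of `X` (inside the model `M` with wellordering `r`):
`Y ≺ M`, `Y ∩ η = X ∩ η`, and `Y` is the Skolem hull of `X ∪ A` for some `A ⊆ λ`. -/
def IsMinExt (M : ZFSet) (r : ZFSet → ZFSet → Prop) (η lam X Y : ZFSet) : Prop :=
  ElemSub M r Y ∧ Y ∩ η = X ∩ η ∧ ∃ A : ZFSet, A ⊆ lam ∧ Y.toSet = SkHull M lam X A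

/-- `U` is a normal measure on the (measurable) cardinal `λ`. -/
def IsNormalMeasure (lam U : ZFSet) : Prop :=
  IsOrd lam ∧ IsUltraOn lam U ∧
  CompleteOn Set.univ (Cardinal.mk lam.toSet) lam U ∧
  (∀ x, x ∈ lam → ({x} : ZFSet) ∉ U) ∧
  ∀ f A, A ∈ U → ZFSet.IsFunc lam lam f →
    (∀ x v, x ∈ A → ZFSet.pair x v ∈ f → (v ∈ x ∨ x = ∅)) →
    ∃ B c, B ∈ U ∧ ∀ x, x ∈ B → ZFSet.pair x c ∈ f

/-- `g` is the `ξ`-th ordinal of `M` (counting from `0`): the ordinals of `M` below `g`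
have order type `ξ`. -/
def NthOrdOf (M : ZFSet) (ξ : Ordinal.{0}) (g : ZFSet) : Prop :=
  IsOrd g ∧ g ∈ M ∧
  IsOtypOf ξ (ZFSet.rank '' {x : ZFSet | x ∈ M.toSet ∧ IsOrd x ∧ x ∈ g})

/-- The relation `≤_o` on a tree `T` on `ω × ω₁`: one sequence extends the other, and
the first coordinate of the last element of the longer one codes that the length of the
first is below the length of the second in the coded ordering.  (`decode k m n` means:
the value `k` codes `m` before `n`.) -/
def leO (T : Set (List ℕ × List Ordinal.{0})) (decode : ℕ → ℕ → ℕ → Prop)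
    (p q : List ℕ × List Ordinal.{0}) : Prop :=
  p ∈ T ∧ q ∈ T ∧
  ((p.1 <+: q.1 ∧ p.2 <+: q.2 ∧ p.1.length < q.1.length ∧
      decode (q.1.getD (q.1.length - 1) 0) p.1.length q.1.length) ∨
   (q.1 <+: p.1 ∧ q.2 <+: p.2 ∧ q.1.length < p.1.length ∧
      decode (p.1.getD (p.1.length - 1) 0) p.1.length q.1.length))

/-- The binary relation on `ω` coded by `x : ω → ω`:  comparisons of `n` with smaller
numbers are decided by `x (n - 1)`. -/
def codedRel (decode : ℕ → ℕ → ℕ → Prop) (x : ℕ → ℕ) (m n : ℕ) : Prop :=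
  (m < n ∧ decode (x (n - 1)) m n) ∨ (n < m ∧ decode (x (m - 1)) m n)


/-! ### Section A: basic facts about `omega1` and clubs -/

theorem omega1_pos : 0 < omega1 := by
  rw [omega1, Cardinal.lt_ord]
  simpa using (Cardinal.aleph_pos 1)

theorem omega1_isLimit : Order.IsSuccLimit omega1 := Cardinal.isSuccLimit_ord (Cardinal.aleph0_le_aleph 1)

theorem lt_omega1_succ {b : Ordinal.{0}} (hb : b < omega1) : b + 1 < omega1 := by
  have := omega1_isLimit.succ_lt hb
  rwa [← Ordinal.add_one_eq_succ] at this

theorem omega1_cof : omega1.cof = Cardinal.aleph 1 :=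
  Cardinal.isRegular_aleph_one.cof_eq

/-- A countable supremum of ordinals below `ω₁` is below `ω₁`. -/
theorem iSup_nat_lt_omega1 (g : ℕ → Ordinal.{0}) (hg : ∀ n, g n < omega1) :
    iSup g < omega1 := by
  apply Ordinal.iSup_lt_ord _ hg
  rw [omega1_cof]
  simpa using Cardinal.aleph0_lt_aleph_one

theorem le_iSup_nat (g : ℕ → Ordinal.{0}) (n : ℕ) : g n ≤ iSup g :=
  Ordinal.le_iSup g n

theorem countable_Iio {a : Ordinal.{0}} (ha : a < omega1) : (Set.Iio a).Countable := by
  rw [Cardinal.countable_iff_lt_aleph_one, Ordinal.mk_Iio_ordinal]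
  have h1 : a.card < Cardinal.aleph 1 := Cardinal.lt_ord.1 ha
  calc Cardinal.lift.{1} a.card < Cardinal.lift.{1} (Cardinal.aleph 1) := Cardinal.lift_lt.2 h1
    _ = Cardinal.aleph 1 := by simp

theorem countable_Iic {a : Ordinal.{0}} (ha : a < omega1) : (Set.Iic a).Countable :=
  (countable_Iio (lt_omega1_succ ha)).mono
    (fun z hz => lt_of_le_of_lt hz (lt_add_one a))

/-- A countable set of ordinals `< ω₁` is bounded strictly below `ω₁`. -/
theorem countable_bdd (s : Set Ordinal.{0}) (hc : s.Countable) (hs : ∀ x ∈ s, x < omega1) :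
    ∃ b, b < omega1 ∧ ∀ x ∈ s, x ≤ b := by
  rcases s.eq_empty_or_nonempty with rfl | hne
  · exact ⟨0, omega1_pos, by simp⟩
  · obtain ⟨f, hf⟩ := hc.exists_surjective hne
    refine ⟨⨆ n, (f n : Ordinal), iSup_nat_lt_omega1 _ (fun n => hs _ (f n).2), ?_⟩
    intro x hx
    obtain ⟨n, hn⟩ := hf ⟨x, hx⟩
    exact le_of_eq (by rw [hn]) |>.trans (le_iSup_nat (fun n => (f n : Ordinal)) n)

/-- Closure-point construction: there are arbitrarily large countable limit
ordinals closed under a given function `u`. -/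
theorem closure_limit (u : Ordinal.{0} → Ordinal.{0}) (hu : ∀ x, x < omega1 → u x < omega1)
    (b : Ordinal.{0}) (hb : b < omega1) :
    ∃ lam, b < lam ∧ lam < omega1 ∧ Order.IsSuccLimit lam ∧ ∀ x, x < lam → u x < lam := by
  have hB : ∀ x, x < omega1 → ∃ B, B < omega1 ∧ ∀ y, y ≤ x → u y ≤ B := by
    intro x hx
    obtain ⟨B, hB1, hB2⟩ := countable_bdd (u '' Set.Iic x) ((countable_Iic hx).image u)
      (by rintro z ⟨y, hy, rfl⟩; exact hu y (lt_of_le_of_lt hy hx))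
    exact ⟨B, hB1, fun y hy => hB2 _ ⟨y, hy, rfl⟩⟩
  classical
  let Bf : Ordinal.{0} → Ordinal.{0} := fun x => if h : x < omega1 then (hB x h).choose else 0
  have hBf : ∀ x, x < omega1 → Bf x < omega1 ∧ ∀ y, y ≤ x → u y ≤ Bf x := by
    intro x hx
    have := (hB x hx).choose_spec
    simp only [Bf, dif_pos hx]
    exact this
  let a : ℕ → Ordinal.{0} := fun n => Nat.rec (b + 1) (fun _ p => max (p + 1) (Bf p + 1)) n
  have ha0 : a 0 = b + 1 := rfl
  have haS : ∀ n, a (n + 1) = max (a n + 1) (Bf (a n) + 1) := fun n => rfl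
  have halt : ∀ n, a n < omega1 := by
    intro n
    induction n with
    | zero => exact lt_omega1_succ hb
    | succ n ih =>
      rw [haS]
      exact max_lt (lt_omega1_succ ih) (lt_omega1_succ (hBf _ ih).1)
  have hmono : ∀ n, a n < a (n + 1) := by
    intro n
    rw [haS]
    exact lt_of_lt_of_le (lt_add_one _) (le_max_left _ _)
  refine ⟨⨆ n, a n, ?_, iSup_nat_lt_omega1 _ halt, ?_, ?_⟩
  · calc b < a 0 := by rw [ha0]; exact lt_add_one b
      _ ≤ _ := le_iSup_nat a 0
  · rw [Ordinal.isSuccLimit_iff]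
    constructor
    · intro h0
      have := le_iSup_nat a 0
      rw [h0] at this
      rw [ha0, Ordinal.add_one_eq_succ] at this
      exact Ordinal.succ_ne_zero b (le_antisymm this zero_le)
    · rw [Order.isSuccPrelimit_iff_succ_lt]
      intro x hx
      obtain ⟨n, hn⟩ := Ordinal.lt_iSup_iff.1 hx
      have : Order.succ x ≤ a n := Order.succ_le_of_lt hn
      exact lt_of_le_of_lt this (lt_of_lt_of_le (hmono n) (le_iSup_nat a (n + 1)))
  · intro x hx
    obtain ⟨n, hn⟩ := Ordinal.lt_iSup_iff.1 hx
    have h1 : u x ≤ Bf (a n) := (hBf _ (halt n)).2 x hn.le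
    have h2 : Bf (a n) < a (n + 1) := by
      rw [haS]
      exact lt_of_lt_of_le (lt_add_one _) (le_max_right _ _)
    exact lt_of_le_of_lt h1 (lt_of_lt_of_le h2 (le_iSup_nat a (n + 1)))

theorem club_Iio : IsClub (Set.Iio omega1) := by
  refine ⟨fun x hx => hx, fun o ho _ _ => ho, fun b hb => ⟨b + 1, lt_omega1_succ hb, lt_add_one b, lt_omega1_succ hb⟩⟩

theorem club_Ioo {b : Ordinal.{0}} (hb : b < omega1) : IsClub (Set.Ioo b omega1) := by
  refine ⟨fun x hx => hx.2, ?_, ?_⟩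
  · intro o ho holim happ
    obtain ⟨c, hc, _, hco⟩ := happ 0 holim.pos
    exact ⟨lt_trans hc.1 hco, ho⟩
  · intro c hc
    refine ⟨max b c + 1, ⟨?_, ?_⟩, ?_, ?_⟩
    · exact lt_of_le_of_lt (le_max_left _ _) (lt_add_one _)
    · exact lt_omega1_succ (max_lt hb hc)
    · exact lt_of_le_of_lt (le_max_right _ _) (lt_add_one _)
    · exact lt_omega1_succ (max_lt hb hc)
/-! ### Section B: club intersections, diagonal intersections, Fodor -/

theorem club_inter {C D : Set Ordinal.{0}} (hC : IsClub C) (hD : IsClub D) :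
    IsClub (C ∩ D) := by
  obtain ⟨hC1, hC2, hC3⟩ := hC
  obtain ⟨hD1, hD2, hD3⟩ := hD
  refine ⟨fun x hx => hC1 hx.1, ?_, ?_⟩
  · intro o ho holim happ
    refine ⟨hC2 o ho holim ?_, hD2 o ho holim ?_⟩
    · intro b hb
      obtain ⟨c, hc, h1, h2⟩ := happ b hb
      exact ⟨c, hc.1, h1, h2⟩
    · intro b hb
      obtain ⟨c, hc, h1, h2⟩ := happ b hb
      exact ⟨c, hc.2, h1, h2⟩
  · intro b hb
    classical
    -- pick next elements
    have hCD : ∀ x, x < omega1 → ∃ c, (c ∈ C ∧ x < c ∧ c < omega1) := by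
      intro x hx
      obtain ⟨c, h1, h2, h3⟩ := hC3 x hx
      exact ⟨c, h1, h2, h3⟩
    have hDD : ∀ x, x < omega1 → ∃ c, (c ∈ D ∧ x < c ∧ c < omega1) := by
      intro x hx
      obtain ⟨c, h1, h2, h3⟩ := hD3 x hx
      exact ⟨c, h1, h2, h3⟩
    let u : Ordinal.{0} → Ordinal.{0} := fun x =>
      if h : x < omega1 then max ((hCD x h).choose) ((hDD x h).choose) else 0
    have hu : ∀ x, x < omega1 → u x < omega1 := by
      intro x hx
      simp only [u, dif_pos hx]
      exact max_lt (hCD x hx).choose_spec.2.2 (hDD x hx).choose_spec.2.2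
    obtain ⟨lam, hblam, hlam1, hlamlim, hlamcl⟩ := closure_limit u hu b hb
    have hmemC : lam ∈ C := by
      apply hC2 lam hlam1 hlamlim
      intro y hy
      have hy1 : y < omega1 := lt_trans hy hlam1
      refine ⟨(hCD y hy1).choose, (hCD y hy1).choose_spec.1,
        le_of_lt (hCD y hy1).choose_spec.2.1, ?_⟩
      have : u y < lam := hlamcl y hy
      simp only [u, dif_pos hy1] at this
      exact lt_of_le_of_lt (le_max_left _ _) this
    have hmemD : lam ∈ D := by
      apply hD2 lam hlam1 hlamlim
      intro y hy
      have hy1 : y < omega1 := lt_trans hy hlam1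
      refine ⟨(hDD y hy1).choose, (hDD y hy1).choose_spec.1,
        le_of_lt (hDD y hy1).choose_spec.2.1, ?_⟩
      have : u y < lam := hlamcl y hy
      simp only [u, dif_pos hy1] at this
      exact lt_of_le_of_lt (le_max_right _ _) this
    exact ⟨lam, ⟨hmemC, hmemD⟩, hblam, hlam1⟩

/-- The club of limit closure points of a function. -/
theorem club_closure (u : Ordinal.{0} → Ordinal.{0}) (hu : ∀ x, x < omega1 → u x < omega1) :
    IsClub {α | α < omega1 ∧ Order.IsSuccLimit α ∧ ∀ β, β < α → u β < α} := by
  refine ⟨fun x hx => hx.1, ?_, ?_⟩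
  · intro o ho holim happ
    refine ⟨ho, holim, ?_⟩
    intro β hβ
    have hβ1 : β + 1 < o := by
      rw [Ordinal.add_one_eq_succ]; exact holim.succ_lt hβ
    obtain ⟨c, hc, h1, h2⟩ := happ (β + 1) hβ1
    exact lt_trans (hc.2.2 β (lt_of_lt_of_le (lt_add_one β) h1)) h2
  · intro b hb
    obtain ⟨lam, h1, h2, h3, h4⟩ := closure_limit u hu b hb
    exact ⟨lam, ⟨h2, h3, h4⟩, h1, h2⟩

/-- Diagonal intersection of clubs is a club. -/
theorem club_diag (C : Ordinal.{0} → Set Ordinal.{0}) (hC : ∀ β, β < omega1 → IsClub (C β)) :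
    IsClub {α | α < omega1 ∧ Order.IsSuccLimit α ∧ ∀ β, β < α → α ∈ C β} := by
  classical
  refine ⟨fun x hx => hx.1, ?_, ?_⟩
  · intro o ho holim happ
    refine ⟨ho, holim, ?_⟩
    intro β hβ
    have hβ1 : β < omega1 := lt_trans hβ ho
    apply (hC β hβ1).2.1 o ho holim
    intro b hb
    obtain ⟨c, hc, h1, h2⟩ := happ (max b (β + 1)) (max_lt hb (holim.succ_lt hβ))
    refine ⟨c, hc.2.2 β (lt_of_lt_of_le (lt_of_lt_of_le (lt_add_one β) (le_max_right b (β+1))) h1),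
      le_trans (le_max_left _ _) h1, h2⟩
  · intro b hb
    have hpick : ∀ β x, β < omega1 → x < omega1 → ∃ c, c ∈ C β ∧ x < c ∧ c < omega1 := by
      intro β x hβ hx
      exact (hC β hβ).2.2 x hx
    let pick : Ordinal.{0} → Ordinal.{0} → Ordinal.{0} := fun β x =>
      if h : β < omega1 ∧ x < omega1 then (hpick β x h.1 h.2).choose else 0
    have hpick' : ∀ β x, β < omega1 → x < omega1 →
        pick β x ∈ C β ∧ x < pick β x ∧ pick β x < omega1 := by
      intro β x hβ hx
      simp only [pick, dif_pos (And.intro hβ hx)]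
      exact (hpick β x hβ hx).choose_spec
    -- u x bounds all pick β x for β < x
    have hubd : ∀ x, x < omega1 → ∃ B, B < omega1 ∧ ∀ β, β < x → pick β x < B := by
      intro x hx
      obtain ⟨B, hB1, hB2⟩ := countable_bdd ((fun β => pick β x) '' Set.Iio x)
        ((countable_Iio hx).image _)
        (by rintro z ⟨β, hβ, rfl⟩; exact (hpick' β x (lt_trans hβ hx) hx).2.2)
      exact ⟨B + 1, lt_omega1_succ hB1, fun β hβ =>
        lt_of_le_of_lt (hB2 _ ⟨β, hβ, rfl⟩) (lt_add_one B)⟩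
    let u : Ordinal.{0} → Ordinal.{0} := fun x => if h : x < omega1 then (hubd x h).choose else 0
    have hu : ∀ x, x < omega1 → u x < omega1 ∧ ∀ β, β < x → pick β x < u x := by
      intro x hx
      simp only [u, dif_pos hx]
      exact (hubd x hx).choose_spec
    obtain ⟨lam, h1, h2, h3, h4⟩ := closure_limit u (fun x hx => (hu x hx).1) b hb
    refine ⟨lam, ⟨h2, h3, ?_⟩, h1, h2⟩
    intro β hβ
    have hβ1 : β < omega1 := lt_trans hβ h2
    apply (hC β hβ1).2.1 lam h2 h3
    intro c hc
    set x := max c (β + 1) with hx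
    have hxlam : x < lam := max_lt hc (h3.succ_lt hβ)
    have hx1 : x < omega1 := lt_trans hxlam h2
    refine ⟨pick β x, (hpick' β x hβ1 hx1).1,
      le_of_lt (lt_of_le_of_lt (le_max_left _ _) (hpick' β x hβ1 hx1).2.1), ?_⟩
    have : pick β x < u x := (hu x hx1).2 β (lt_of_lt_of_le (lt_add_one β) (le_max_right c (β+1)))
    exact lt_of_lt_of_le this (le_of_lt (h4 x hxlam))

theorem stat_inter_club {S C : Set Ordinal.{0}} (hS : IsStat S) (hC : IsClub C) :
    IsStat (S ∩ C) := by
  intro D hD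
  obtain ⟨x, hx1, hx2⟩ := hS (C ∩ D) (club_inter hC hD)
  exact ⟨x, ⟨hx1, hx2.1⟩, hx2.2⟩

theorem stat_of_not_bdd {P : Ordinal.{0} → Prop}
    (h : ¬ ∃ C, IsClub C ∧ ∀ α ∈ C, P α) :
    IsStat {α | α < omega1 ∧ ¬ P α} := by
  intro C hC
  by_contra hne
  apply h
  refine ⟨C, hC, fun α hα => ?_⟩
  by_contra hP
  exact hne ⟨α, ⟨hC.1 hα, hP⟩, hα⟩

/-- Fodor's lemma. -/
theorem fodor {S : Set Ordinal.{0}} (hS : IsStat S) (F : Ordinal.{0} → Ordinal.{0})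
    (hF : ∀ α ∈ S, F α < α) : ∃ β, β < omega1 ∧ IsStat {α ∈ S | F α = β} := by
  classical
  by_contra h
  push_neg at h
  have h' : ∀ β, β < omega1 → ∃ C, IsClub C ∧ {α ∈ S | F α = β} ∩ C = ∅ := by
    intro β hβ
    have := h β hβ
    rw [IsStat] at this
    push_neg at this
    obtain ⟨C, hC, hCe⟩ := this
    exact ⟨C, hC, hCe⟩
  let C : Ordinal.{0} → Set Ordinal.{0} := fun β =>
    if h : β < omega1 then (h' β h).choose else Set.Iio omega1
  have hC : ∀ β, β < omega1 → IsClub (C β) ∧ {α ∈ S | F α = β} ∩ C β = ∅ := by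
    intro β hβ
    simp only [C, dif_pos hβ]
    exact (h' β hβ).choose_spec
  obtain ⟨α, hαS, hαD⟩ := hS _ (club_diag C (fun β hβ => (hC β hβ).1))
  have hFα : F α < α := hF α hαS
  have hα1 : α < omega1 := hαD.1
  have : α ∈ C (F α) := hαD.2.2 (F α) hFα
  have hmem : α ∈ {a ∈ S | F a = F α} ∩ C (F α) := ⟨⟨hαS, rfl⟩, this⟩
  rw [(hC (F α) (lt_trans hFα hα1)).2] at hmem
  exact hmem
/-! ### Section C: order types of sets of countable/ω₂-bounded ordinals -/

/-- The order type of a set of ordinals, as an ordinal in the next universe. -/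
noncomputable def OT (s : Set Ordinal.{0}) : Ordinal.{1} :=
  Ordinal.type (Subrel ((· < ·) : Ordinal.{0} → Ordinal.{0} → Prop) (· ∈ s))

theorem OT_mono {s t : Set Ordinal.{0}} (h : s ⊆ t) : OT s ≤ OT t :=
  RelEmbedding.ordinal_type_le
    ⟨⟨Set.inclusion h, Set.inclusion_injective h⟩, Iff.rfl⟩

theorem OT_Iio (δ : Ordinal.{0}) : OT (Set.Iio δ) = Ordinal.lift.{1} δ :=
  Ordinal.type_lt_Iio δ

theorem OT_le_lift {s : Set Ordinal.{0}} {δ : Ordinal.{0}} (h : s ⊆ Set.Iio δ) :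
    OT s ≤ Ordinal.lift.{1} δ := by
  rw [← OT_Iio]; exact OT_mono h

open Classical in
/-- The order type of a (bounded) set of ordinals, as an ordinal in the same universe. -/
noncomputable def otp (s : Set Ordinal.{0}) : Ordinal.{0} :=
  if h : ∃ a : Ordinal.{0}, Ordinal.lift.{1} a = OT s then h.choose else 0

theorem lift_otp {s : Set Ordinal.{0}} {δ : Ordinal.{0}} (h : s ⊆ Set.Iio δ) :
    Ordinal.lift.{1} (otp s) = OT s := by
  have hr : ∃ a : Ordinal.{0}, Ordinal.lift.{1} a = OT s :=
    Ordinal.mem_range_lift_of_le (OT_le_lift h)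
  classical
  rw [otp, dif_pos hr]
  exact hr.choose_spec

/-- Iso between a cut of `s` and the initial segment of `Subrel` below the cut point. -/
noncomputable def cutIso (s : Set Ordinal.{0}) (ξ : Ordinal.{0}) (hξ : ξ ∈ s) :
    (Subrel ((· < ·) : Ordinal.{0} → Ordinal.{0} → Prop) (· ∈ s ∩ Set.Iio ξ)) ≃r
      (Subrel (Subrel ((· < ·) : Ordinal.{0} → Ordinal.{0} → Prop) (· ∈ s))
        (fun b => Subrel ((· < ·) : Ordinal.{0} → Ordinal.{0} → Prop) (· ∈ s) b ⟨ξ, hξ⟩)) where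
  toFun x := ⟨⟨x.1, x.2.1⟩, x.2.2⟩
  invFun y := ⟨y.1.1, y.1.2, y.2⟩
  left_inv x := rfl
  right_inv y := rfl
  map_rel_iff' := Iff.rfl

theorem OT_cut_eq_typein {s : Set Ordinal.{0}} {ξ : Ordinal.{0}} (hξ : ξ ∈ s) :
    OT (s ∩ Set.Iio ξ) =
      Ordinal.typein (Subrel ((· < ·) : Ordinal.{0} → Ordinal.{0} → Prop) (· ∈ s)) ⟨ξ, hξ⟩ := by
  rw [← Ordinal.type_subrel]
  exact Ordinal.type_eq.2 ⟨cutIso s ξ hξ⟩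

theorem OT_cut_lt {s : Set Ordinal.{0}} {ξ : Ordinal.{0}} (hξ : ξ ∈ s) :
    OT (s ∩ Set.Iio ξ) < OT s := by
  rw [OT_cut_eq_typein hξ]
  exact Ordinal.typein_lt_type _ _

theorem OT_cut_lt_cut {s : Set Ordinal.{0}} {ξ ξ' : Ordinal.{0}} (hξ : ξ ∈ s) (hξ' : ξ' ∈ s)
    (h : ξ < ξ') : OT (s ∩ Set.Iio ξ) < OT (s ∩ Set.Iio ξ') := by
  rw [OT_cut_eq_typein hξ, OT_cut_eq_typein hξ']
  exact (Ordinal.typein_lt_typein _).2 h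

theorem OT_cut_surj {s : Set Ordinal.{0}} {ι : Ordinal.{1}} (h : ι < OT s) :
    ∃ ξ, ∃ hξ : ξ ∈ s, OT (s ∩ Set.Iio ξ) = ι := by
  obtain ⟨a, ha⟩ := Ordinal.typein_surj _ h
  exact ⟨a.1, a.2, by rw [OT_cut_eq_typein a.2]; exact ha⟩

theorem OT_image {s : Set Ordinal.{0}} {g : Ordinal.{0} → Ordinal.{0}}
    (hg : StrictMonoOn g s) : OT (g '' s) = OT s := by
  refine (Ordinal.type_eq.2 ⟨?_⟩).symm
  refine ⟨Equiv.Set.imageOfInjOn g s hg.injOn, ?_⟩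
  rintro ⟨a, ha⟩ ⟨b, hb⟩
  show g a < g b ↔ a < b
  exact hg.lt_iff_lt ha hb

theorem card_OT (s : Set Ordinal.{0}) : (OT s).card = Cardinal.mk s :=
  Ordinal.card_type _

-- otp-level lemmas; `hs` is a boundedness assumption.
section otpLemmas

variable {s t : Set Ordinal.{0}} {δ : Ordinal.{0}}

theorem otp_mono (hs : s ⊆ t) (ht : t ⊆ Set.Iio δ) : otp s ≤ otp t := by
  rw [← Ordinal.lift_le.{1}, lift_otp (hs.trans ht), lift_otp ht]
  exact OT_mono hs

theorem otp_cut_lt (ht : s ⊆ Set.Iio δ) {ξ : Ordinal.{0}} (hξ : ξ ∈ s) :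
    otp (s ∩ Set.Iio ξ) < otp s := by
  rw [← Ordinal.lift_lt.{1}, lift_otp ((Set.inter_subset_left).trans ht), lift_otp ht]
  exact OT_cut_lt hξ

theorem otp_cut_lt_cut (ht : s ⊆ Set.Iio δ) {ξ ξ' : Ordinal.{0}} (hξ : ξ ∈ s) (hξ' : ξ' ∈ s)
    (h : ξ < ξ') : otp (s ∩ Set.Iio ξ) < otp (s ∩ Set.Iio ξ') := by
  rw [← Ordinal.lift_lt.{1}, lift_otp ((Set.inter_subset_left).trans ht),
    lift_otp ((Set.inter_subset_left).trans ht)]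
  exact OT_cut_lt_cut hξ hξ' h

theorem otp_cut_surj (ht : s ⊆ Set.Iio δ) {ι : Ordinal.{0}} (h : ι < otp s) :
    ∃ ξ, ξ ∈ s ∧ otp (s ∩ Set.Iio ξ) = ι := by
  have h' : Ordinal.lift.{1} ι < OT s := by
    rw [← lift_otp ht]; exact Ordinal.lift_lt.2 h
  obtain ⟨ξ, hξ, he⟩ := OT_cut_surj h'
  refine ⟨ξ, hξ, ?_⟩
  rw [← Ordinal.lift_inj.{1}, lift_otp ((Set.inter_subset_left).trans ht), he]

theorem otp_image {g : Ordinal.{0} → Ordinal.{0}} (hg : StrictMonoOn g s)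
    (hs : s ⊆ Set.Iio δ) {δ' : Ordinal.{0}} (hs' : g '' s ⊆ Set.Iio δ') :
    otp (g '' s) = otp s := by
  rw [← Ordinal.lift_inj.{1}, lift_otp hs', lift_otp hs]
  exact OT_image hg

theorem otp_empty : otp (∅ : Set Ordinal.{0}) = 0 := by
  have h : (∅ : Set Ordinal.{0}) ⊆ Set.Iio 1 := by simp
  rw [← Ordinal.lift_inj.{1}, lift_otp h]
  rw [OT, Ordinal.type_eq_zero_iff_isEmpty.2 inferInstance, Ordinal.lift_zero]

theorem otp_pos (hs : s ⊆ Set.Iio δ) (hne : s.Nonempty) : 0 < otp s := by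
  rw [pos_iff_ne_zero]
  intro h0
  have : OT s = 0 := by rw [← lift_otp hs, h0, Ordinal.lift_zero]
  rw [OT, Ordinal.type_eq_zero_iff_isEmpty] at this
  obtain ⟨x, hx⟩ := hne
  exact this.elim' ⟨x, hx⟩

theorem otp_lt_omega1 (hs : s ⊆ Set.Iio δ) (hc : s.Countable) : otp s < omega1 := by
  rw [← Ordinal.lift_lt.{1}, lift_otp hs]
  have h1 : Ordinal.lift.{1} omega1 = ((Cardinal.aleph 1 : Cardinal.{1})).ord := by
    rw [omega1, Cardinal.lift_ord, Cardinal.lift_aleph, Ordinal.lift_one]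
  rw [h1, Cardinal.lt_ord, card_OT]
  calc Cardinal.mk s ≤ Cardinal.aleph0 := by
        rwa [Cardinal.mk_le_aleph0_iff, Set.countable_coe_iff]
    _ < Cardinal.aleph 1 := Cardinal.aleph0_lt_aleph_one

theorem otp_lt_omega2 (hs : s ⊆ Set.Iio δ)
    (hc : Cardinal.mk s ≤ Cardinal.lift.{1,0} (Cardinal.aleph 1 : Cardinal.{0})) : otp s < omega2 := by
  rw [← Ordinal.lift_lt.{1}, lift_otp hs]
  have h1 : Ordinal.lift.{1} omega2 = ((Cardinal.aleph 2 : Cardinal.{1})).ord := by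
    rw [omega2, Cardinal.lift_ord, Cardinal.lift_aleph]
    norm_num
  rw [h1, Cardinal.lt_ord, card_OT]
  calc Cardinal.mk s ≤ Cardinal.lift.{1,0} (Cardinal.aleph 1 : Cardinal.{0}) := hc
    _ = (Cardinal.aleph 1 : Cardinal.{1}) := by rw [Cardinal.lift_aleph, Ordinal.lift_one]
    _ < Cardinal.aleph 2 := Cardinal.aleph_lt_aleph.2 (one_lt_two : (1:Ordinal.{1}) < 2)

end otpLemmas
/-! ### Section D: the theory of canonical functions -/

theorem canonical_iff (γ : Ordinal.{0}) (f : Ordinal.{0} → Ordinal.{0}) :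
    Canonical γ f ↔
      (∀ β, β < γ → ∀ g, Canonical β g → LtOnClub g f) ∧
      (∀ h : Ordinal.{0} → Ordinal.{0},
        (∀ β, β < γ → ∀ g, Canonical β g → LtOnClub g h) → BddOnClub f h) := by
  conv_lhs => rw [Canonical, Ordinal.lt_wf.fix_eq]
  exact Iff.rfl

theorem canonical_zero : Canonical 0 (fun _ => (0 : Ordinal.{0})) := by
  rw [canonical_iff]
  refine ⟨fun β hβ => absurd hβ not_lt_zero, fun h' _ => ?_⟩
  exact ⟨Set.Iio omega1, club_Iio, fun α _ => zero_le⟩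

theorem canonical_bdd {γ : Ordinal.{0}} {g g' : Ordinal.{0} → Ordinal.{0}}
    (hg : Canonical γ g) (hg' : Canonical γ g') : BddOnClub g g' :=
  ((canonical_iff _ _).1 hg).2 g' ((canonical_iff _ _).1 hg').1

/-- The canonical function associated with a surjection onto `Iio γ`. -/
noncomputable def canF (h : Ordinal.{0} → Ordinal.{0}) : Ordinal.{0} → Ordinal.{0} :=
  fun α => otp (h '' Set.Iio α)

/-- `h` is a surjection from `ω₁` onto `Iio γ`. -/
def SurjOnto (γ : Ordinal.{0}) (h : Ordinal.{0} → Ordinal.{0}) : Prop :=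
  (∀ β, h β < γ) ∧ ∀ ξ, ξ < γ → ∃ β, β < omega1 ∧ h β = ξ

theorem canF_image_subset {γ : Ordinal.{0}} {h : Ordinal.{0} → Ordinal.{0}}
    (hh : SurjOnto γ h) (α : Ordinal.{0}) : h '' Set.Iio α ⊆ Set.Iio γ := by
  rintro z ⟨ξ, _, rfl⟩; exact hh.1 ξ

theorem surjOnto_restrict {γ β : Ordinal.{0}} {h : Ordinal.{0} → Ordinal.{0}}
    (hh : SurjOnto γ h) (hβγ : β < γ) (hβ : 0 < β) :
    SurjOnto β (fun ξ => if h ξ < β then h ξ else 0) := by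
  constructor
  · intro ξ
    by_cases hc : h ξ < β
    · simpa [hc]
    · simpa [hc] using hβ
  · intro ξ hξ
    obtain ⟨β', hβ', he⟩ := hh.2 ξ (lt_trans hξ hβγ)
    exact ⟨β', hβ', by simp [he, hξ]⟩

theorem image_restrict {β : Ordinal.{0}} {h : Ordinal.{0} → Ordinal.{0}}
    (hβ : 0 < β) {ξ₀ ξ₁ : Ordinal.{0}} (h0 : h ξ₀ = 0) (h1 : h ξ₁ = β)
    {α : Ordinal.{0}} (hα0 : ξ₀ < α) (hα1 : ξ₁ < α) :
    (fun ξ => if h ξ < β then h ξ else 0) '' Set.Iio α = (h '' Set.Iio α) ∩ Set.Iio β := by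
  ext z
  constructor
  · rintro ⟨ξ, hξ, rfl⟩
    by_cases hc : h ξ < β
    · simp only [if_pos hc]
      exact ⟨⟨ξ, hξ, rfl⟩, hc⟩
    · simp only [if_neg hc]
      exact ⟨⟨ξ₀, hα0, h0⟩, hβ⟩
  · rintro ⟨⟨ξ, hξ, rfl⟩, hz⟩
    refine ⟨ξ, hξ, ?_⟩
    have hzz : h ξ < β := hz
    simp only [if_pos hzz]

theorem canonical_canF : ∀ γ : Ordinal.{0}, γ < omega2 → 0 < γ →
    ∀ h, SurjOnto γ h → Canonical γ (canF h) := by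
  intro γ
  induction γ using Ordinal.induction with
  | h γ IH =>
    intro hγ2 hγ0 h hh
    obtain ⟨ξz, hξz1, hξz2⟩ := hh.2 0 hγ0
    rw [canonical_iff]
    constructor
    · -- canF h dominates all canonical functions for smaller ordinals
      intro β hβ g hg
      rcases eq_zero_or_pos β with rfl | hβpos
      · obtain ⟨C, hC, hCle⟩ := canonical_bdd hg canonical_zero
        refine ⟨C ∩ Set.Ioo ξz omega1, club_inter hC (club_Ioo hξz1), ?_⟩
        rintro α ⟨hαC, hα1, hα2⟩
        have hpos : 0 < canF h α :=
          otp_pos (canF_image_subset hh α) ⟨0, ⟨ξz, hα1, hξz2⟩⟩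
        exact lt_of_le_of_lt (hCle α hαC) hpos
      · obtain ⟨ξb, hξb1, hξb2⟩ := hh.2 β hβ
        have hcan := IH β hβ (lt_trans hβ hγ2) hβpos _ (surjOnto_restrict hh hβ hβpos)
        obtain ⟨C, hC, hCle⟩ := canonical_bdd hg hcan
        refine ⟨C ∩ Set.Ioo (max ξz ξb) omega1,
          club_inter hC (club_Ioo (max_lt hξz1 hξb1)), ?_⟩
        rintro α ⟨hαC, hα1, hα2⟩
        have hα1z : ξz < α := lt_of_le_of_lt (le_max_left _ _) hα1
        have hα1b : ξb < α := lt_of_le_of_lt (le_max_right _ _) hα1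
        have heq : (fun ξ => if h ξ < β then h ξ else 0) '' Set.Iio α
            = (h '' Set.Iio α) ∩ Set.Iio β :=
          image_restrict hβpos hξz2 hξb2 hα1z hα1b
        have hlt : canF (fun ξ => if h ξ < β then h ξ else 0) α < canF h α := by
          rw [canF, heq]
          exact otp_cut_lt (canF_image_subset hh α) ⟨ξb, hα1b, hξb2⟩
        exact lt_of_le_of_lt (hCle α hαC) hlt
    · -- minimality
      intro h' H
      by_contra hB
      have hstat : IsStat {α | α < omega1 ∧ ¬ (canF h α ≤ h' α)} := stat_of_not_bdd hB
      classical
      -- regressive choice of the cut point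
      set E : Ordinal.{0} → Prop := fun α =>
        ∃ β, β < α ∧ h' α = otp ((h '' Set.Iio α) ∩ Set.Iio (h β)) with hE
      have hEholds : ∀ α, α < omega1 → ¬ (canF h α ≤ h' α) → E α := by
        intro α hα hlt
        have hlt' : h' α < otp (h '' Set.Iio α) := lt_of_not_ge hlt
        obtain ⟨ξ, hξmem, hξeq⟩ := otp_cut_surj (canF_image_subset hh α) hlt'
        obtain ⟨β, hβα, rfl⟩ := hξmem
        exact ⟨β, hβα, hξeq.symm⟩
      set F : Ordinal.{0} → Ordinal.{0} := fun α => if hα : E α then hα.choose else 0 with hF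
      have hFreg : ∀ α ∈ {α | α < omega1 ∧ ¬ (canF h α ≤ h' α)}, F α < α := by
        rintro α ⟨hα1, hα2⟩
        have := hEholds α hα1 hα2
        simp only [F, dif_pos this]
        exact this.choose_spec.1
      obtain ⟨βs, hβs1, hβsStat⟩ := fodor hstat F hFreg
      set δ := h βs with hδ
      have hTeq : ∀ α ∈ {α ∈ {α | α < omega1 ∧ ¬ (canF h α ≤ h' α)} | F α = βs},
          h' α = otp ((h '' Set.Iio α) ∩ Set.Iio δ) := by
        rintro α ⟨⟨hα1, hα2⟩, hα3⟩
        have hEα := hEholds α hα1 hα2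
        have : F α = hEα.choose := by simp only [F, dif_pos hEα]
        rw [hδ, ← hα3, this]
        exact hEα.choose_spec.2
      rcases eq_zero_or_pos δ with hδ0 | hδpos
      · obtain ⟨C, hC, hClt⟩ := H 0 hγ0 _ canonical_zero
        obtain ⟨α, hαT, hαC⟩ := hβsStat C hC
        have h1 : h' α = 0 := by
          have := hTeq α hαT
          have hempty : (h '' Set.Iio α) ∩ Set.Iio (0 : Ordinal.{0}) = ∅ := by
            ext x; simp [not_lt_zero]
          rwa [hδ0, hempty, otp_empty] at this
        have h2 : 0 < h' α := hClt α hαC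
        rw [h1] at h2
        exact absurd h2 (lt_irrefl 0)
      · have hδγ : δ < γ := hh.1 βs
        obtain ⟨ξd, hξd1, hξd2⟩ := hh.2 δ hδγ
        have hcan := IH δ hδγ (lt_trans hδγ hγ2) hδpos _ (surjOnto_restrict hh hδγ hδpos)
        obtain ⟨C, hC, hClt⟩ := H δ hδγ _ hcan
        obtain ⟨α, hαT, hαC, hα1, hα2⟩ :=
          hβsStat (C ∩ Set.Ioo (max ξz ξd) omega1)
            (club_inter hC (club_Ioo (max_lt hξz1 hξd1)))
        have hα1z : ξz < α := lt_of_le_of_lt (le_max_left _ _) hα1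
        have hα1d : ξd < α := lt_of_le_of_lt (le_max_right _ _) hα1
        have heq : (fun ξ => if h ξ < δ then h ξ else 0) '' Set.Iio α
            = (h '' Set.Iio α) ∩ Set.Iio δ :=
          image_restrict hδpos hξz2 hξd2 hα1z hα1d
        have h1 : h' α = canF (fun ξ => if h ξ < δ then h ξ else 0) α := by
          rw [canF, heq]
          exact hTeq α hαT
        have h2 := hClt α hαC
        rw [← h1] at h2
        exact absurd h2 (lt_irrefl _)
/-! ### Section E: list helpers, the tree `S`, and codes of wellfounded relations -/

theorem getD_take' {α : Type*} {l : List α} {n i : ℕ} (h : i < n) (d : α) :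
    (l.take n).getD i d = l.getD i d := by
  rw [List.getD_eq_getElem?_getD, List.getElem?_take, if_pos h, ← List.getD_eq_getElem?_getD]

theorem getD_ofFn' {α : Type*} (x : ℕ → α) {n i : ℕ} (h : i < n) (d : α) :
    (List.ofFn (fun j : Fin n => x j)).getD i d = x i := by
  rw [List.getD_eq_getElem?_getD, List.getElem?_eq_getElem (by simpa using h)]
  simp

theorem take_ofFn' {α : Type*} (x : ℕ → α) {m n : ℕ} (h : m ≤ n) :
    (List.ofFn (fun j : Fin n => x j)).take m = List.ofFn (fun j : Fin m => x j) := by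
  apply List.ext_getElem (by simp [h])
  intro i h1 h2
  simp [List.getElem_ofFn]

theorem prefix_ofFn' {α : Type*} (x : ℕ → α) {m n : ℕ} (h : m ≤ n) :
    (List.ofFn (fun j : Fin m => x j)) <+: (List.ofFn (fun j : Fin n => x j)) := by
  rw [List.prefix_iff_eq_take, List.length_ofFn]
  exact (take_ofFn' x h).symm

theorem prefix_getD' {α : Type*} {l₁ l₂ : List α} (h : l₁ <+: l₂) {i : ℕ}
    (hi : i < l₁.length) (d : α) : l₁.getD i d = l₂.getD i d := by
  rw [List.getD_eq_getElem?_getD, List.getD_eq_getElem?_getD,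
    List.getElem?_eq_getElem hi, List.getElem?_eq_getElem (lt_of_lt_of_le hi h.length_le)]
  rw [h.getElem hi]

/-- The tree of attempts to build an infinite descending sequence (with increasing
numerical indices) in the relation coded by a real. -/
def STree : Set (List ℕ × List ℕ) :=
  {p | p.1.length = p.2.length ∧ ∀ i, i + 1 < p.2.length →
    (p.2.getD i 0 < p.2.getD (i+1) 0 ∧
      (Nat.pair (p.2.getD (i+1) 0) (p.2.getD i 0) < p.1.length →
        p.1.getD (Nat.pair (p.2.getD (i+1) 0) (p.2.getD i 0)) 0 = 1))}

theorem isTreeN_STree : IsTreeN STree := by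
  rintro ⟨s, t⟩ ⟨hlen, hcon⟩
  refine ⟨hlen, fun n => ⟨by simp [hlen], ?_⟩⟩
  intro i hi
  simp only [List.length_take] at hi
  have hin : i + 1 < n := lt_of_lt_of_le hi (min_le_left _ _)
  have hit : i + 1 < t.length := lt_of_lt_of_le hi (min_le_right _ _)
  rw [getD_take' (lt_trans (Nat.lt_succ_self i) hin) 0, getD_take' hin 0]
  refine ⟨(hcon i hit).1, ?_⟩
  intro hpair
  simp only [List.length_take] at hpair
  have h1 : Nat.pair (t.getD (i+1) 0) (t.getD i 0) < s.length :=
    lt_of_lt_of_le hpair (min_le_right _ _)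
  have h2 : Nat.pair (t.getD (i+1) 0) (t.getD i 0) < n :=
    lt_of_lt_of_le hpair (min_le_left _ _)
  rw [getD_take' h2 0]
  exact (hcon i hit).2 h1

theorem mem_projN_STree (x : ℕ → ℕ) :
    x ∈ projN STree ↔ ∃ y : ℕ → ℕ, ∀ i, y i < y (i+1) ∧ x (Nat.pair (y (i+1)) (y i)) = 1 := by
  constructor
  · rintro ⟨y, hy⟩
    refine ⟨y, fun i => ?_⟩
    set n := max (i + 2) (Nat.pair (y (i+1)) (y i) + 1) with hn
    obtain ⟨hlen, hcon⟩ := hy n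
    have hi : i + 1 < (List.ofFn (fun j : Fin n => y j)).length := by
      simp only [List.length_ofFn]
      exact lt_of_lt_of_le (Nat.lt_succ_self (i+1)) (le_max_left _ _)
    have hi' : i + 1 < n := by simpa using hi
    have := hcon i hi
    rw [getD_ofFn' y hi' 0, getD_ofFn' y (lt_trans (Nat.lt_succ_self i) hi') 0] at this
    refine ⟨this.1, ?_⟩
    have hp : Nat.pair (y (i+1)) (y i) < n :=
      lt_of_lt_of_le (Nat.lt_succ_self _) (le_max_right _ _)
    have h2 := this.2 (by simpa using hp)
    rwa [getD_ofFn' x hp 0] at h2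
  · rintro ⟨y, hy⟩
    refine ⟨y, fun n => ⟨by simp, ?_⟩⟩
    intro i hi
    have hi' : i + 1 < n := by simpa using hi
    rw [getD_ofFn' y hi' 0, getD_ofFn' y (lt_trans (Nat.lt_succ_self i) hi') 0]
    refine ⟨(hy i).1, ?_⟩
    intro hp
    have hp' : Nat.pair (y (i+1)) (y i) < n := by simpa using hp
    rw [getD_ofFn' x hp' 0]
    exact (hy i).2

open Classical in
/-- A code for a wellfounded relation of rank at least `β` on `ℕ`. -/
theorem exists_code (β : Ordinal.{0}) (hβ : β < omega1) :
    ∃ x : ℕ → ℕ, ∃ b : ℕ → Ordinal.{0},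
      (∀ k l, x (Nat.pair k l) = 1 → l < k ∧ b k < b l) ∧
      (∀ k l, l < k → b k < b l → x (Nat.pair k l) = 1) ∧
      (∀ ξ, ξ < β → ∀ m, ∃ k, m < k ∧ b k = ξ) := by
  rcases eq_zero_or_pos β with rfl | hβpos
  · refine ⟨fun _ => 0, fun _ => 0, ?_, ?_, ?_⟩
    · intro k l h; exact absurd h (by simp)
    · intro k l _ h; exact absurd h (lt_irrefl 0)
    · intro ξ hξ; exact absurd hξ not_lt_zero
  · obtain ⟨e, he⟩ := (countable_Iio hβ).exists_surjective ⟨0, Set.mem_Iio.2 hβpos⟩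
    set b : ℕ → Ordinal.{0} := fun k => (e k.unpair.1).1 with hb
    refine ⟨fun m => if m.unpair.2 < m.unpair.1 ∧ b m.unpair.1 < b m.unpair.2 then 1 else 0,
      b, ?_, ?_, ?_⟩
    · intro k l h
      simp only [Nat.unpair_pair] at h
      by_cases hc : l < k ∧ b k < b l
      · exact hc
      · rw [if_neg hc] at h; exact absurd h (by simp)
    · intro k l h1 h2
      simp only [Nat.unpair_pair]
      exact if_pos ⟨h1, h2⟩
    · intro ξ hξ m
      obtain ⟨i, hi⟩ := he ⟨ξ, hξ⟩
      refine ⟨Nat.pair i (m+1), lt_of_lt_of_le (Nat.lt_succ_self m) (Nat.right_le_pair i (m+1)), ?_⟩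
      simp only [hb, Nat.unpair_pair]
      rw [hi]

/-- Soundness implies no descending sequence. -/
theorem code_no_desc {x : ℕ → ℕ} {b : ℕ → Ordinal.{0}}
    (sound : ∀ k l, x (Nat.pair k l) = 1 → l < k ∧ b k < b l) :
    ¬ ∃ y : ℕ → ℕ, ∀ i, y i < y (i+1) ∧ x (Nat.pair (y (i+1)) (y i)) = 1 := by
  rintro ⟨y, hy⟩
  obtain ⟨o, ⟨i0, rfl⟩, hmin⟩ :=
    Ordinal.lt_wf.has_min (Set.range (fun i => b (y i))) ⟨_, ⟨0, rfl⟩⟩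
  exact hmin _ ⟨i0 + 1, rfl⟩ (sound _ _ (hy i0).2).2

/-- Rank-transfer: if a code of rank `≥ β` admits a monotone map into cuts of
a set `R` of ordinals, then `β ≤ otp R`. -/
theorem code_bound {x : ℕ → ℕ} {b : ℕ → Ordinal.{0}} {β : Ordinal.{0}}
    (compl : ∀ k l, l < k → b k < b l → x (Nat.pair k l) = 1)
    (rich : ∀ ξ, ξ < β → ∀ m, ∃ k, m < k ∧ b k = ξ)
    (ψ : ℕ → Ordinal.{0})
    (hψ : ∀ k l, l < k → x (Nat.pair k l) = 1 → ψ k < ψ l)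
    (R : Set Ordinal.{0}) {δ : Ordinal.{0}} (hR : R ⊆ Set.Iio δ)
    (hmem : ∀ k, ψ k ∈ R) : β ≤ otp R := by
  have key : ∀ ξ, ξ < β → ∀ l, b l = ξ → ξ ≤ otp (R ∩ Set.Iio (ψ l)) := by
    intro ξ
    induction ξ using Ordinal.induction with
    | h ξ IH =>
      intro hξβ l hbl
      apply le_of_forall_lt
      intro ξ' hξ'
      obtain ⟨k, hlk, hbk⟩ := rich ξ' (lt_trans hξ' hξβ) l
      have hx : x (Nat.pair k l) = 1 := compl k l hlk (by rw [hbk, hbl]; exact hξ')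
      have h1 : ψ k < ψ l := hψ k l hlk hx
      have h2 : ξ' ≤ otp (R ∩ Set.Iio (ψ k)) := IH ξ' hξ' (lt_trans hξ' hξβ) k hbk
      have h3 : otp (R ∩ Set.Iio (ψ k)) < otp (R ∩ Set.Iio (ψ l)) :=
        otp_cut_lt_cut hR (hmem k) (hmem l) h1
      exact lt_of_le_of_lt h2 h3
  apply le_of_forall_lt
  intro ξ hξ
  obtain ⟨k, _, hbk⟩ := rich ξ hξ 0
  exact lt_of_le_of_lt (key ξ hξ k hbk) (otp_cut_lt hR (hmem k))
/-! ### Section F: the tree on `ω × ω₁`, made wellfounded -/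

theorem wf_of_no_desc {α : Type*} (r : α → α → Prop)
    (h : ∀ g : ℕ → α, ¬ ∀ n, r (g (n+1)) (g n)) : WellFounded r := by
  classical
  constructor
  intro a
  by_contra ha
  have H : ∀ b, ¬ Acc r b → ∃ c, r c b ∧ ¬ Acc r c := by
    intro b hb
    by_contra hc
    push_neg at hc
    exact hb (Acc.intro b (fun c hcb => hc c hcb))
  let F : {b // ¬ Acc r b} → {b // ¬ Acc r b} :=
    fun b => ⟨(H b.1 b.2).choose, (H b.1 b.2).choose_spec.2⟩
  have hF : ∀ b, r (F b).1 b.1 := fun b => (H b.1 b.2).choose_spec.1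
  apply h (fun n => ((F^[n] ⟨a, ha⟩ : {b // ¬ Acc r b})).1)
  intro n
  rw [Function.iterate_succ_apply' F n _]
  exact hF _

/-- Node lengths used for the embedded copies of natural numbers. -/
def Nlen : ℕ → ℕ := fun k => (Finset.range (k+1)).sum (fun j => Nat.pair j j + 1)

theorem Nlen_succ (k : ℕ) : Nlen (k+1) = Nlen k + (Nat.pair (k+1) (k+1) + 1) := by
  simp [Nlen, Finset.sum_range_succ]

theorem Nlen_strictMono : StrictMono Nlen := by
  apply strictMono_nat_of_lt_succ
  intro n
  rw [Nlen_succ]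
  omega

theorem succ_le_Nlen (k : ℕ) : k + 1 ≤ Nlen k := by
  induction k with
  | zero => simp [Nlen]
  | succ n ih => rw [Nlen_succ]; omega

theorem pair_lt_Nlen {k l : ℕ} (h : l < k) : Nat.pair k l < Nlen k := by
  have h1 : Nat.pair k l < Nat.pair k k + 1 := by
    simp only [Nat.pair]
    rw [if_neg (by omega), if_neg (lt_irrefl k)]
    omega
  have h2 : Nat.pair k k + 1 ≤ Nlen k :=
    Finset.single_le_sum (f := fun j => Nat.pair j j + 1)
      (fun i _ => Nat.zero_le _) (by simp : k ∈ Finset.range (k+1))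
  omega

/-- Rank function of a wellfounded relation. -/
noncomputable def _root_.WellFounded.rank {α : Type*} {r : α → α → Prop} (hwf : WellFounded r)
    (a : α) : Ordinal :=
  (hwf.apply a).rank

theorem _root_.WellFounded.rank_lt_of_rel {α : Type*} {r : α → α → Prop} (hwf : WellFounded r)
    {a b : α} (h : r a b) : hwf.rank a < hwf.rank b :=
  Acc.rank_lt_of_rel _ h

/-- Transfer of countable ordinals into the type `omega1.ToType`. -/
noncomputable def oE : Ordinal.{0} → omega1.ToType := fun o =>
  if h : o < omega1 then (Ordinal.ToType.mk (o := omega1)) ⟨o, h⟩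
  else (Ordinal.ToType.mk (o := omega1)) ⟨0, omega1_pos⟩

noncomputable def oD : omega1.ToType → Ordinal.{0} :=
  fun c => (((Ordinal.ToType.mk (o := omega1))).symm c).1

theorem oD_oE {o : Ordinal.{0}} (h : o < omega1) : oD (oE o) = o := by
  simp [oE, oD, dif_pos h]

theorem map_oD_oE {l : List Ordinal.{0}} (h : ∀ o ∈ l, o < omega1) :
    (l.map oE).map oD = l := by
  have h' : ∀ o ∈ l, (oD ∘ oE) o = id o := fun o ho => oD_oE (h o ho)
  rw [List.map_map, List.map_congr_left h', List.map_id]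

theorem map_oE_prefix_rev {l₁ l₂ : List Ordinal.{0}} (h1 : ∀ o ∈ l₁, o < omega1)
    (h2 : ∀ o ∈ l₂, o < omega1) (h : l₁.map oE <+: l₂.map oE) : l₁ <+: l₂ := by
  have := h.map oD
  rwa [map_oD_oE h1, map_oD_oE h2] at this

/-- Transfer of nodes. -/
noncomputable def EE : (List ℕ × List Ordinal.{0}) → (List ℕ × List omega1.ToType) :=
  fun p => (p.1, p.2.map oE)

theorem EE_inj {p q : List ℕ × List Ordinal.{0}} (hp : ∀ o ∈ p.2, o < omega1)
    (hq : ∀ o ∈ q.2, o < omega1) (h : EE p = EE q) : p = q := by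
  obtain ⟨h1, h2⟩ := Prod.mk.injEq .. ▸ h
  have h2' : (p.2.map oE).map oD = (q.2.map oE).map oD := by rw [h2]
  rw [map_oD_oE hp, map_oD_oE hq] at h2'
  exact Prod.ext h1 h2'

/-- The transferred tree. -/
def TTset (T : Set (List ℕ × List Ordinal.{0})) : Set (List ℕ × List omega1.ToType) :=
  EE '' T

/-- The wellfounded relation on nodes: longer node extends shorter one and codes
that its own index is below the shorter node's index. -/
def rrel : (List ℕ × List omega1.ToType) → (List ℕ × List omega1.ToType) → Prop :=
  fun p q => ∃ k l : ℕ, l < k ∧ p.1.length = Nlen k ∧ q.1.length = Nlen l ∧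
    q.1 <+: p.1 ∧ q.2 <+: p.2 ∧ p.1.getD (Nat.pair k l) 0 = 1

def rrT (T : Set (List ℕ × List Ordinal.{0})) : ↥(TTset T) → ↥(TTset T) → Prop :=
  fun p q => rrel p.1 q.1

theorem getD_eq_getElem' {α : Type*} {l : List α} {i : ℕ} (h : i < l.length) (d : α) :
    l.getD i d = l[i] := by
  rw [List.getD_eq_getElem?_getD, List.getElem?_eq_getElem h]
  rfl

theorem rrT_wf {T : Set (List ℕ × List Ordinal.{0})} (hTtree : IsTreeO T)
    (hTord : ∀ p ∈ T, ∀ o ∈ p.2, o < omega1)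
    (hproj : ∀ x : ℕ → ℕ, x ∈ projO T → x ∉ projN STree) :
    WellFounded (rrT T) := by
  classical
  apply wf_of_no_desc
  intro g hg
  set p : ℕ → List ℕ × List omega1.ToType := fun n => (g n).1 with hp
  have hdesc : ∀ n, rrel (p (n+1)) (p n) := fun n => hg n
  have hmex : ∀ n, ∃ l, (p n).1.length = Nlen l := by
    intro n
    obtain ⟨k, l, _, _, hql, _, _, _⟩ := hdesc n
    exact ⟨l, hql⟩
  choose m hmlen using hmex
  have hstep : ∀ n, m n < m (n+1) ∧ (p n).1 <+: (p (n+1)).1 ∧ (p n).2 <+: (p (n+1)).2 ∧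
      (p (n+1)).1.getD (Nat.pair (m (n+1)) (m n)) 0 = 1 := by
    intro n
    obtain ⟨k, l, hlk, hpk, hql, hpre1, hpre2, hcode⟩ := hdesc n
    have hk : k = m (n+1) := Nlen_strictMono.injective (by rw [← hpk, hmlen])
    have hl : l = m n := Nlen_strictMono.injective (by rw [← hql, hmlen])
    subst hk hl
    exact ⟨hlk, hpre1, hpre2, hcode⟩
  have hmmono : StrictMono m := strictMono_nat_of_lt_succ (fun n => (hstep n).1)
  have hlenlb : ∀ n, n < (p n).1.length := by
    intro n
    rw [hmlen]
    calc n < m n + 1 := Nat.lt_succ_of_le hmmono.le_apply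
      _ ≤ Nlen (m n) := succ_le_Nlen (m n)
  have hchain1 : ∀ a b, a ≤ b → (p a).1 <+: (p b).1 := by
    intro a b hab
    induction b, hab using Nat.le_induction with
    | base => exact List.prefix_refl _
    | succ b _ ih => exact ih.trans (hstep b).2.1
  -- the real x
  set x : ℕ → ℕ := fun i => (p (i+1)).1.getD i 0 with hx
  have hxagree : ∀ n i, i < (p n).1.length → (p n).1.getD i 0 = x i := by
    intro n i hi
    rcases le_total (i+1) n with hle | hle
    · exact (prefix_getD' (hchain1 (i+1) n hle) (lt_trans (Nat.lt_succ_self i) (hlenlb (i+1))) 0).symm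
    · exact prefix_getD' (hchain1 n (i+1) hle) hi 0
  -- pull back to T
  have htex : ∀ n, ∃ t, t ∈ T ∧ EE t = p n := fun n => (g n).2
  choose t ht1 ht2 using htex
  have ht1' : ∀ n, (t n).1 = (p n).1 := by
    intro n; rw [← ht2 n]; rfl
  have ht2' : ∀ n, (t n).2.map oE = (p n).2 := by
    intro n; rw [← ht2 n]; rfl
  have htlen : ∀ n, (t n).2.length = (p n).1.length := by
    intro n
    rw [← (hTtree _ (ht1 n)).1, ht1' n]
  have hchain2 : ∀ a b, a ≤ b → (t a).2 <+: (t b).2 := by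
    intro a b hab
    apply map_oE_prefix_rev (hTord _ (ht1 a)) (hTord _ (ht1 b))
    rw [ht2' a, ht2' b]
    induction b, hab using Nat.le_induction with
    | base => exact List.prefix_refl _
    | succ b _ ih => exact ih.trans (hstep b).2.2.1
  set yy : ℕ → Ordinal.{0} := fun i => (t (i+1)).2.getD i 0 with hyy
  have hyyagree : ∀ n i, i < (t n).2.length → (t n).2.getD i 0 = yy i := by
    intro n i hi
    rcases le_total (i+1) n with hle | hle
    · refine (prefix_getD' (hchain2 (i+1) n hle) ?_ 0).symm
      rw [htlen]; exact lt_trans (Nat.lt_succ_self i) (hlenlb (i+1))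
    · exact prefix_getD' (hchain2 n (i+1) hle) hi 0
  have hxT : x ∈ projO T := by
    refine ⟨yy, fun n => ?_⟩
    have hn1 : n ≤ (t n).1.length := by rw [ht1' n]; exact (hlenlb n).le
    have hn2 : n ≤ (t n).2.length := by rw [htlen n]; exact (hlenlb n).le
    have he1 : List.ofFn (fun i : Fin n => x i) = (t n).1.take n := by
      apply List.ext_getElem (by simp [hn1])
      intro i hi1 hi2
      have hin : i < n := by simpa using hi1
      rw [List.getElem_ofFn]
      rw [List.getElem_take]
      have : (t n).1[i] = (t n).1.getD i 0 := (getD_eq_getElem' (by omega) 0).symm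
      rw [this, ht1' n, hxagree n i (by rw [← ht1' n]; omega)]
    have he2 : List.ofFn (fun i : Fin n => yy i) = (t n).2.take n := by
      apply List.ext_getElem (by simp [hn2])
      intro i hi1 hi2
      have hin : i < n := by simpa using hi1
      rw [List.getElem_ofFn]
      rw [List.getElem_take]
      have : (t n).2[i] = (t n).2.getD i 0 := (getD_eq_getElem' (by omega) 0).symm
      rw [this, hyyagree n i (by omega)]
    rw [he1, he2]
    exact ((hTtree _ (ht1 n)).2 n)
  have hxS : x ∈ projN STree := by
    rw [mem_projN_STree]
    refine ⟨m, fun i => ⟨(hstep i).1, ?_⟩⟩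
    have hlt : Nat.pair (m (i+1)) (m i) < (p (i+1)).1.length := by
      rw [hmlen]; exact pair_lt_Nlen (hstep i).1
    rw [← hxagree (i+1) _ hlt]
    exact (hstep i).2.2.2
  exact hproj x hxT hxS
/-! ### Section G: rank sets of the transferred tree -/

/-- Ordinals which are ranks of nodes whose ordinal entries lie below `α`. -/
noncomputable def RSet {T : Set (List ℕ × List Ordinal.{0})} (wf : WellFounded (rrT T))
    (α : Ordinal.{0}) : Set Ordinal.{0} :=
  {o | ∃ pp : ↥(TTset T), (∃ t, t ∈ T ∧ EE t = pp.1 ∧ ∀ o' ∈ t.2, o' < α) ∧ wf.rank pp = o}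

theorem RSet_mono {T : Set (List ℕ × List Ordinal.{0})} (wf : WellFounded (rrT T))
    {α α' : Ordinal.{0}} (h : α ≤ α') : RSet wf α ⊆ RSet wf α' := by
  rintro o ⟨pp, ⟨t, ht1, ht2, ht3⟩, rfl⟩
  exact ⟨pp, ⟨t, ht1, ht2, fun o' ho' => lt_of_lt_of_le (ht3 o' ho') h⟩, rfl⟩

theorem RSet_bdd {T : Set (List ℕ × List Ordinal.{0})} (wf : WellFounded (rrT T))
    (α : Ordinal.{0}) : RSet wf α ⊆ Set.Iio ((⨆ pp : ↥(TTset T), wf.rank pp) + 1) := by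
  rintro o ⟨pp, _, rfl⟩
  exact lt_of_le_of_lt (Ordinal.le_iSup _ pp) (lt_add_one _)

theorem list_bound {l : List Ordinal.{0}} {α : Ordinal.{0}} (hα : Order.IsSuccLimit α)
    (h : ∀ o ∈ l, o < α) : ∃ δ, δ < α ∧ ∀ o ∈ l, o < δ := by
  induction l with
  | nil => exact ⟨0, hα.pos, by simp⟩
  | cons a l ih =>
    obtain ⟨δ, hδ, hδl⟩ := ih (fun o ho => h o (List.mem_cons_of_mem a ho))
    have ha1 : a + 1 < α := by
      rw [Ordinal.add_one_eq_succ]; exact hα.succ_lt (h a List.mem_cons_self)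
    refine ⟨max δ (a + 1), max_lt hδ ha1, ?_⟩
    intro o ho
    rcases List.mem_cons.1 ho with rfl | ho'
    · exact lt_of_lt_of_le (lt_add_one o) (le_max_right _ _)
    · exact lt_of_lt_of_le (hδl o ho') (le_max_left _ _)

theorem RSet_cover {T : Set (List ℕ × List Ordinal.{0})} (wf : WellFounded (rrT T))
    {α : Ordinal.{0}} (hα : Order.IsSuccLimit α) {o : Ordinal.{0}} (ho : o ∈ RSet wf α) :
    ∃ δ, δ < α ∧ o ∈ RSet wf δ := by
  obtain ⟨pp, ⟨t, ht1, ht2, ht3⟩, rfl⟩ := ho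
  obtain ⟨δ, hδ1, hδ2⟩ := list_bound hα ht3
  exact ⟨δ, hδ1, ⟨pp, ⟨t, ht1, ht2, hδ2⟩, rfl⟩⟩

theorem RSet_countable {T : Set (List ℕ × List Ordinal.{0})} (wf : WellFounded (rrT T))
    {δ : Ordinal.{0}} (hδ : δ < omega1) : (RSet wf δ).Countable := by
  classical
  have him : RSet wf δ = wf.rank ''
      {pp : ↥(TTset T) | ∃ t, t ∈ T ∧ EE t = pp.1 ∧ ∀ o' ∈ t.2, o' < δ} := by
    ext o
    constructor
    · rintro ⟨pp, hpp, rfl⟩; exact ⟨pp, hpp, rfl⟩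
    · rintro ⟨pp, hpp, rfl⟩; exact ⟨pp, hpp, rfl⟩
  rw [him]
  apply Set.Countable.image
  rw [← Set.countable_coe_iff]
  set Sd := {pp : ↥(TTset T) | ∃ t, t ∈ T ∧ EE t = pp.1 ∧ ∀ o' ∈ t.2, o' < δ} with hSd
  have hCIio : Countable ↥(Set.Iio δ) := (countable_Iio hδ).to_subtype
  have hchoose : ∀ pp : ↥Sd, ∃ t, t ∈ T ∧ EE t = pp.1.1 ∧ ∀ o' ∈ t.2, o' < δ :=
    fun pp => pp.2
  choose tf htf1 htf2 htf3 using hchoose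
  set φ : ↥Sd → List ℕ × List ↥(Set.Iio δ) := fun pp =>
    ((tf pp).1, (tf pp).2.attach.map (fun o => ⟨o.1, htf3 pp o.1 o.2⟩)) with hφ
  have hrec : ∀ pp, ((φ pp).1, (φ pp).2.map Subtype.val) = tf pp := by
    intro pp
    simp only [φ]
    refine Prod.ext rfl ?_
    show ((tf pp).2.attach.map _).map Subtype.val = (tf pp).2
    rw [List.map_map]
    have : ∀ o ∈ (tf pp).2.attach,
        (Subtype.val ∘ fun o : {x // x ∈ (tf pp).2} => (⟨o.1, htf3 pp o.1 o.2⟩ : ↥(Set.Iio δ))) o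
          = Subtype.val o := fun o _ => rfl
    rw [List.map_congr_left this, List.attach_map_subtype_val]
  have hinj : Function.Injective φ := by
    intro pp qq h
    have h1 : tf pp = tf qq := by rw [← hrec pp, ← hrec qq, h]
    have h2 : pp.1.1 = qq.1.1 := by rw [← htf2 pp, ← htf2 qq, h1]
    exact Subtype.ext (Subtype.ext h2)
  exact hinj.countable

theorem mk_TTset_le (T : Set (List ℕ × List Ordinal.{0})) :
    Cardinal.mk ↥(TTset T) ≤ Cardinal.aleph 1 := by
  have hκ : Cardinal.mk omega1.ToType = Cardinal.aleph 1 := by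
    rw [Cardinal.mk_toType, omega1, Cardinal.card_ord]
  have hinf : Infinite omega1.ToType := by
    rw [Cardinal.infinite_iff, hκ]
    exact Cardinal.aleph0_le_aleph 1
  calc Cardinal.mk ↥(TTset T) ≤ Cardinal.mk (List ℕ × List omega1.ToType) :=
        Cardinal.mk_set_le _
    _ = Cardinal.mk (List ℕ) * Cardinal.mk (List omega1.ToType) := by
        rw [Cardinal.mk_prod, Cardinal.lift_id, Cardinal.lift_id]
    _ = Cardinal.aleph0 * Cardinal.aleph 1 := by
        rw [Cardinal.mk_list_eq_mk, Cardinal.mk_list_eq_mk, hκ, Cardinal.mk_nat]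
    _ ≤ Cardinal.aleph 1 := by
        rw [Cardinal.mul_eq_max le_rfl (Cardinal.aleph0_le_aleph 1)]
        exact max_le (Cardinal.aleph0_le_aleph 1) le_rfl

theorem mk_RSet_le {T : Set (List ℕ × List Ordinal.{0})} (wf : WellFounded (rrT T))
    (α : Ordinal.{0}) :
    Cardinal.mk ↥(RSet wf α) ≤ Cardinal.lift.{1,0} (Cardinal.aleph 1 : Cardinal.{0}) := by
  have h1 : RSet wf α ⊆ Set.range (wf.rank) := by
    rintro o ⟨pp, _, rfl⟩; exact ⟨pp, rfl⟩
  calc Cardinal.mk ↥(RSet wf α) ≤ Cardinal.mk ↥(Set.range (wf.rank)) :=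
        Cardinal.mk_le_mk_of_subset h1
    _ ≤ Cardinal.lift.{1,0} (Cardinal.mk ↥(TTset T)) := by
        have := Cardinal.mk_range_le_lift (f := wf.rank)
        rwa [Cardinal.lift_id'] at this
    _ ≤ Cardinal.lift.{1,0} (Cardinal.aleph 1 : Cardinal.{0}) :=
        Cardinal.lift_le.2 (mk_TTset_le T)
/-! ### Section H: final assembly -/

theorem stmt_11_aux
    (hSB : ∀ S : Set (List ℕ × List ℕ), IsTreeN S →
      ∀ f : Ordinal.{0} → (ℕ → ℕ), (∀ α, α < omega1 → f α ∉ projN S) →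
      ∃ T : Set (List ℕ × List Ordinal.{0}), IsTreeO T ∧
        (∀ p ∈ T, ∀ o ∈ p.2, o < omega1) ∧
        projO T = {x : ℕ → ℕ | x ∉ projN S} ∧
        ∃ C, IsClub C ∧ ∀ α ∈ C, f α ∈ projOBelow T α) :
    Bounding := by
  classical
  intro f hf
  -- codes for the values of f
  have hcode : ∀ α : Ordinal.{0}, α < omega1 → ∃ x : ℕ → ℕ, ∃ b : ℕ → Ordinal.{0},
      (∀ k l, x (Nat.pair k l) = 1 → l < k ∧ b k < b l) ∧
      (∀ k l, l < k → b k < b l → x (Nat.pair k l) = 1) ∧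
      (∀ ξ, ξ < f α → ∀ m, ∃ k, m < k ∧ b k = ξ) := by
    intro α hα
    exact exists_code (f α) (hf α hα)
  choose X Bf hsound hcompl hrich using hcode
  set F : Ordinal.{0} → ℕ → ℕ :=
    fun α => if h : α < omega1 then X α h else fun _ => 0 with hFdef
  have hFeq : ∀ α (h : α < omega1), F α = X α h := by
    intro α h; simp only [F, dif_pos h]
  have hFnot : ∀ α, α < omega1 → F α ∉ projN STree := by
    intro α hα hmem
    rw [hFeq α hα, mem_projN_STree] at hmem
    exact code_no_desc (hsound α hα) hmem
  obtain ⟨T, hTtree, hTord, hTproj, C, hC, hCmem⟩ := hSB STree isTreeN_STree F hFnot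
  have hproj' : ∀ x : ℕ → ℕ, x ∈ projO T → x ∉ projN STree := by
    intro x hx
    rw [hTproj] at hx
    exact hx
  have wf := rrT_wf hTtree hTord hproj'
  set bnd : Ordinal.{0} := (⨆ pp : ↥(TTset T), wf.rank pp) + 1 with hbnd
  set V : Set Ordinal.{0} := RSet wf omega1 with hV
  have hVbdd : V ⊆ Set.Iio bnd := RSet_bdd wf omega1
  -- T is nonempty
  have hVne : V.Nonempty := by
    have hx0 : (fun _ => 0 : ℕ → ℕ) ∈ projO T := by
      rw [hTproj]
      intro hmem
      rw [mem_projN_STree] at hmem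
      obtain ⟨y, hy⟩ := hmem
      exact absurd (hy 0).2 (by simp)
    obtain ⟨y0, hy0⟩ := hx0
    have hnil : (([], []) : List ℕ × List Ordinal.{0}) ∈ T := by
      have := hy0 0
      simpa using this
    refine ⟨wf.rank ⟨EE ([], []), ⟨([], []), hnil, rfl⟩⟩, ?_⟩
    exact ⟨⟨EE ([], []), ⟨([], []), hnil, rfl⟩⟩, ⟨([], []), hnil, rfl, by simp⟩, rfl⟩
  set γ : Ordinal.{0} := otp V with hγdef
  have hγ2 : γ < omega2 := otp_lt_omega2 hVbdd (mk_RSet_le wf omega1)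
  have hγ0 : 0 < γ := otp_pos hVbdd hVne
  -- surjection onto V
  have hmkV : Cardinal.mk ↥V ≤ Cardinal.mk ↥(Set.Iio omega1) := by
    rw [Ordinal.mk_Iio_ordinal, omega1, Cardinal.card_ord]
    exact mk_RSet_le wf omega1
  obtain ⟨emb⟩ := (Cardinal.le_def _ _).1 hmkV
  have hVneS : Nonempty ↥V := hVne.to_subtype
  have hw0 : Function.Surjective (Function.invFun emb) :=
    Function.invFun_surjective emb.injective
  set w : Ordinal.{0} → Ordinal.{0} := fun β =>
    if h : β < omega1 then (Function.invFun emb ⟨β, h⟩ : ↥V).1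
    else ((Function.invFun emb ⟨0, omega1_pos⟩ : ↥V)).1 with hwdef
  have hw1 : ∀ β, w β ∈ V := by
    intro β
    by_cases h : β < omega1
    · simp only [w, dif_pos h]; exact Subtype.mem _
    · simp only [w, dif_neg h]; exact Subtype.mem _
  have hw2 : ∀ v ∈ V, ∃ β, β < omega1 ∧ w β = v := by
    intro v hv
    obtain ⟨x, hx⟩ := hw0 ⟨v, hv⟩
    refine ⟨x.1, x.2, ?_⟩
    have hxlt : (x : Ordinal.{0}) < omega1 := x.2
    simp only [hwdef]
    rw [dif_pos hxlt, Subtype.coe_eta x hxlt, hx]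
  -- the canonical surjection onto Iio γ
  set hcan : Ordinal.{0} → Ordinal.{0} := fun β => otp (V ∩ Set.Iio (w β)) with hhcan
  have hsurj : SurjOnto γ hcan := by
    constructor
    · intro β
      exact otp_cut_lt hVbdd (hw1 β)
    · intro ξ hξ
      obtain ⟨v, hv, he⟩ := otp_cut_surj hVbdd hξ
      obtain ⟨β, hβ, rfl⟩ := hw2 v hv
      exact ⟨β, hβ, he⟩
  have hcanon : Canonical γ (canF hcan) := canonical_canF γ hγ2 hγ0 hcan hsurj
  -- the closure club on which `canF hcan` equals `otp (RSet wf ·)`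
  have hu1ex : ∀ β : Ordinal.{0}, ∃ δ, δ < omega1 ∧ w β ∈ RSet wf δ := by
    intro β
    exact RSet_cover wf omega1_isLimit (hw1 β)
  choose u1 hu1a hu1b using hu1ex
  have hu2ex : ∀ δ : Ordinal.{0}, δ < omega1 →
      ∃ Bb, Bb < omega1 ∧ ∀ o ∈ RSet wf δ, ∃ β, β < Bb ∧ w β = o := by
    intro δ hδ
    have hsel : ∀ o : Ordinal.{0}, ∃ β, o ∈ RSet wf δ → (β < omega1 ∧ w β = o) := by
      intro o
      by_cases ho : o ∈ RSet wf δ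
      · obtain ⟨β, hβ, he⟩ := hw2 o (RSet_mono wf hδ.le ho)
        exact ⟨β, fun _ => ⟨hβ, he⟩⟩
      · exact ⟨0, fun h => absurd h ho⟩
    choose sel hsel using hsel
    obtain ⟨Bb, hBb1, hBb2⟩ := countable_bdd (sel '' RSet wf δ)
      ((RSet_countable wf hδ).image sel)
      (by rintro z ⟨o, ho, rfl⟩; exact (hsel o ho).1)
    refine ⟨Bb + 1, lt_omega1_succ hBb1, ?_⟩
    intro o ho
    exact ⟨sel o, lt_of_le_of_lt (hBb2 _ ⟨o, ho, rfl⟩) (lt_add_one Bb), (hsel o ho).2⟩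
  set u2 : Ordinal.{0} → Ordinal.{0} :=
    fun δ => if h : δ < omega1 then (hu2ex δ h).choose else 0 with hu2def
  have hu2a : ∀ δ, δ < omega1 → u2 δ < omega1 := by
    intro δ h
    simp only [u2, dif_pos h]
    exact (hu2ex δ h).choose_spec.1
  have hu2b : ∀ δ, δ < omega1 → ∀ o ∈ RSet wf δ, ∃ β, β < u2 δ ∧ w β = o := by
    intro δ h
    simp only [u2, dif_pos h]
    exact (hu2ex δ h).choose_spec.2
  set E1 := {α | α < omega1 ∧ Order.IsSuccLimit α ∧ ∀ β, β < α → u1 β < α} with hE1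
  set E2 := {α | α < omega1 ∧ Order.IsSuccLimit α ∧ ∀ β, β < α → u2 β < α} with hE2
  have hE1club : IsClub E1 := club_closure u1 (fun x _ => hu1a x)
  have hE2club : IsClub E2 := club_closure u2 (fun x hx => hu2a x hx)
  -- on E1 ∩ E2 the image of w is the rank set
  have hWR : ∀ α ∈ E1 ∩ E2, w '' Set.Iio α = RSet wf α := by
    rintro α ⟨⟨hα1, hαlim, hαc1⟩, _, _, hαc2⟩
    apply Set.eq_of_subset_of_subset
    · rintro o ⟨β, hβ, rfl⟩
      exact RSet_mono wf (hαc1 β hβ).le (hu1b β)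
    · intro o ho
      obtain ⟨δ, hδα, hoδ⟩ := RSet_cover wf hαlim ho
      have hδ1 : δ < omega1 := lt_trans hδα hα1
      obtain ⟨β, hβu, he⟩ := hu2b δ hδ1 o hoδ
      exact ⟨β, lt_trans hβu (hαc2 δ hδα), he⟩
  have hcanEq : ∀ α ∈ E1 ∩ E2, canF hcan α = otp (RSet wf α) := by
    intro α hα
    have h1 : hcan '' Set.Iio α = (fun v => otp (V ∩ Set.Iio v)) '' (w '' Set.Iio α) := by
      rw [Set.image_image]
    rw [canF, h1, hWR α hα]
    apply otp_image
    · intro a ha b hb hab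
      exact otp_cut_lt_cut hVbdd (RSet_mono wf hα.1.1.le ha) (RSet_mono wf hα.1.1.le hb) hab
    · exact RSet_bdd wf α
    · rintro z ⟨v, hv, rfl⟩
      exact otp_cut_lt hVbdd (RSet_mono wf hα.1.1.le hv)
  -- the bound on the club C
  have hbound : ∀ α ∈ C, f α ≤ otp (RSet wf α) := by
    intro α hαC
    have hα1 : α < omega1 := hC.1 hαC
    obtain ⟨yy, hyylt, hbr⟩ := hCmem α hαC
    rw [hFeq α hα1] at hbr
    -- nodes of the branch
    set nd : ℕ → List ℕ × List Ordinal.{0} := fun n =>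
      (List.ofFn (fun i : Fin n => X α hα1 i), List.ofFn (fun i : Fin n => yy i)) with hnd
    have hndT : ∀ n, nd n ∈ T := fun n => hbr n
    have hndmem : ∀ n, EE (nd n) ∈ TTset T := fun n => ⟨nd n, hndT n, rfl⟩
    set ψ : ℕ → Ordinal.{0} := fun k => wf.rank ⟨EE (nd (Nlen k)), hndmem (Nlen k)⟩ with hψ
    have hψmono : ∀ k l, l < k → X α hα1 (Nat.pair k l) = 1 → ψ k < ψ l := by
      intro k l hlk hx
      apply WellFounded.rank_lt_of_rel wf
      show rrel (EE (nd (Nlen k))) (EE (nd (Nlen l)))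
      refine ⟨k, l, hlk, by simp [EE, nd], by simp [EE, nd], ?_, ?_, ?_⟩
      · exact prefix_ofFn' _ (Nlen_strictMono.monotone hlk.le)
      · exact (prefix_ofFn' yy (Nlen_strictMono.monotone hlk.le)).map oE
      · show (List.ofFn (fun i : Fin (Nlen k) => X α hα1 i)).getD (Nat.pair k l) 0 = 1
        rw [getD_ofFn' _ (pair_lt_Nlen hlk) 0]
        exact hx
    have hψmem : ∀ k, ψ k ∈ RSet wf α := by
      intro k
      refine ⟨⟨EE (nd (Nlen k)), hndmem (Nlen k)⟩, ⟨nd (Nlen k), hndT (Nlen k), rfl, ?_⟩, rfl⟩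
      intro o ho
      simp only [nd] at ho
      rw [List.mem_ofFn] at ho
      obtain ⟨i, rfl⟩ := ho
      exact hyylt i
    exact code_bound (hcompl α hα1) (hrich α hα1) ψ hψmono (RSet wf α) (RSet_bdd wf α) hψmem
  -- conclusion
  refine ⟨γ, hγ2, canF hcan, hcanon, C ∩ (E1 ∩ E2),
    club_inter hC (club_inter hE1club hE2club), ?_⟩
  rintro α ⟨hαC, hαE⟩
  rw [hcanEq α hαE]
  exact hbound α hαC

theorem stmt_11
    (hSB : ∀ S : Set (List ℕ × List ℕ), IsTreeN S →
      ∀ f : Ordinal.{0} → (ℕ → ℕ), (∀ α, α < omega1 → f α ∉ projN S) →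
      ∃ T : Set (List ℕ × List Ordinal.{0}), IsTreeO T ∧
        (∀ p ∈ T, ∀ o ∈ p.2, o < omega1) ∧
        projO T = {x : ℕ → ℕ | x ∉ projN S} ∧
        ∃ C, IsClub C ∧ ∀ α ∈ C, f α ∈ projOBelow T α) :
    Bounding := stmt_11_aux hSB

end P746
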